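/- arXiv:1304.5763 — 7 statements merged into one kernel-verified Lean document; each statement's English description precedes it below -/
import Mathlib

section
/- Let r ≥ 2 be a natural number, q = 2r − 1, and for n ≥ 1 let μₙ be the element of the group algebra ℂ[F_r] given by μₙ = (1/((q+1)q^{n−1})) ∑_{|x|=n} x (the sum over all elements of word length n), with μ₀ the identity element. Then for every n ≥ 1, the convolution product satisfies μ₁ * μₙ = (1/(q+1))·μ_{n−1} + (q/(q+1))·μ_{n+1}. -/
noncomputable section

open FreeGroup

/-- Word length of an element of a free group. -/
def wordLength {α : Type*} [DecidableEq α] (x : FreeGroup α) : ℕ :=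
  x.toWord.length

lemma toWord_single_mul {α : Type*} [DecidableEq α] (s : α × Bool) (z : FreeGroup α) :
    (FreeGroup.mk [s] * z).toWord =
      List.casesOn z.toWord [s] fun hd tl =>
        if s.1 = hd.1 ∧ s.2 = !hd.2 then tl else s :: hd :: tl := by
  conv_lhs => rw [← FreeGroup.mk_toWord (x := z)]
  rw [FreeGroup.mul_mk, FreeGroup.toWord_mk, List.singleton_append, FreeGroup.reduce.cons,
    FreeGroup.reduce_toWord]

lemma wordLength_single_mul_nil {α : Type*} [DecidableEq α] (s : α × Bool) (z : FreeGroup α)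
    (hz : z.toWord = []) : wordLength (FreeGroup.mk [s] * z) = 1 := by
  unfold wordLength
  rw [toWord_single_mul, hz]
  rfl

lemma wordLength_single_mul_cons {α : Type*} [DecidableEq α] (s : α × Bool) (z : FreeGroup α)
    (hd : α × Bool) (tl : List (α × Bool)) (hz : z.toWord = hd :: tl) :
    wordLength (FreeGroup.mk [s] * z) =
      if s = (hd.1, !hd.2) then tl.length else tl.length + 2 := by
  unfold wordLength
  rw [toWord_single_mul, hz]
  by_cases h : s = (hd.1, !hd.2)
  · have h1 : s.1 = hd.1 ∧ s.2 = !hd.2 := by rw [h]; exact ⟨rfl, rfl⟩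
    simp [h, h1]
  · have h1 : ¬(s.1 = hd.1 ∧ s.2 = !hd.2) := by
      intro ⟨a, b⟩; exact h (Prod.ext a b)
    simp [h, h1]

lemma mk_single_inj {α : Type*} [DecidableEq α] {s t : α × Bool}
    (h : FreeGroup.mk [s] = FreeGroup.mk [t]) : s = t := by
  have := congrArg FreeGroup.toWord h
  rw [FreeGroup.toWord_mk, FreeGroup.toWord_mk, FreeGroup.reduce_singleton,
    FreeGroup.reduce_singleton] at this
  exact List.singleton_injective this

lemma mu_one_eq (r : ℕ) (q : ℂ)
    (μ : ℕ → MonoidAlgebra ℂ (FreeGroup (Fin r)))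
    (hμ : ∀ n : ℕ, 1 ≤ n → ∀ x : FreeGroup (Fin r),
      (μ n).coeff x = if wordLength x = n then 1 / ((q + 1) * q ^ (n - 1)) else 0) :
    μ 1 = ∑ s : Fin r × Bool, MonoidAlgebra.single (FreeGroup.mk [s]) (1 / (q + 1)) := by
  apply MonoidAlgebra.ext
  apply Finsupp.ext
  intro x
  rw [hμ 1 le_rfl x, MonoidAlgebra.coeff_sum, Finsupp.finset_sum_apply]
  simp only [MonoidAlgebra.coeff_single, Finsupp.single_apply, pow_zero, mul_one]
  by_cases hx : wordLength x = 1
  · obtain ⟨t, ht⟩ := List.length_eq_one_iff.mp hx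
    have hxt : x = FreeGroup.mk [t] := by
      conv_lhs => rw [← FreeGroup.mk_toWord (x := x), ht]
    rw [if_pos hx]
    rw [show (1:ℕ)-1 = 0 from rfl, pow_zero, mul_one]
    rw [Finset.sum_congr rfl (fun s _ => ?_) (g := fun s => if s = t then 1/(q+1) else 0)]
    · rw [Finset.sum_ite_eq' Finset.univ t (fun _ => 1/(q+1)), if_pos (Finset.mem_univ t)]
    · congr 1
      simp only [eq_iff_iff]
      constructor
      · intro h; exact mk_single_inj (h.trans hxt)
      · intro h; rw [h, hxt]
  · rw [if_neg hx]
    symm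
    apply Finset.sum_eq_zero
    intro s _
    rw [if_neg]
    intro h
    apply hx
    rw [← h]
    unfold wordLength
    rw [FreeGroup.toWord_mk, FreeGroup.reduce_singleton]
    rfl

lemma aux1 (q x : ℂ) (hq0 : q ≠ 0) (hq1 : q + 1 ≠ 0) (hx : x ≠ 0) :
    1/(q+1) * (1/((q+1)*x)) + q * (1/(q+1) * 0) =
      1/(q+1) * 0 + q/(q+1) * (1/((q+1)*(x*q))) := by
  field_simp
  ring

lemma aux2 (q x : ℂ) (hq0 : q ≠ 0) (hq1 : q + 1 ≠ 0) (hx : x ≠ 0) :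
    1/(q+1) * 0 + q * (1/(q+1) * (1/((q+1)*(x*q)))) =
      1/(q+1) * (1/((q+1)*x)) + q/(q+1) * 0 := by
  field_simp
  ring

theorem mu_one_conv_mu_n (r : ℕ) (hr : 2 ≤ r) (q : ℂ) (hq : q = 2 * r - 1)
    (μ : ℕ → MonoidAlgebra ℂ (FreeGroup (Fin r)))
    (hμ0 : μ 0 = 1)
    (hμ : ∀ n : ℕ, 1 ≤ n → ∀ x : FreeGroup (Fin r),
      (μ n).coeff x = if wordLength x = n then 1 / ((q + 1) * q ^ (n - 1)) else 0)
    (n : ℕ) (hn : 1 ≤ n) :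
    μ 1 * μ n = (1 / (q + 1)) • μ (n - 1) + (q / (q + 1)) • μ (n + 1) := by
  obtain ⟨k, rfl⟩ : ∃ k, n = k + 1 := ⟨n - 1, (Nat.succ_pred_eq_of_pos hn).symm⟩
  have hqnat : q = ((2 * r - 1 : ℕ) : ℂ) := by
    rw [hq, Nat.cast_sub (by omega)]; push_cast; ring
  have hq0 : q ≠ 0 := by
    rw [hqnat]; exact Nat.cast_ne_zero.mpr (by omega)
  have hq1nat : q + 1 = ((2 * r : ℕ) : ℂ) := by
    rw [hqnat, ← Nat.cast_add_one, Nat.sub_add_cancel (by omega)]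
  have hq1 : q + 1 ≠ 0 := by
    rw [hq1nat]; exact Nat.cast_ne_zero.mpr (by omega)
  apply MonoidAlgebra.ext
  apply Finsupp.ext
  intro z
  rw [mu_one_eq r q μ hμ, Finset.sum_mul, MonoidAlgebra.coeff_sum, Finsupp.finset_sum_apply]
  simp only [MonoidAlgebra.coeff_single_mul_apply]
  have hinv : ∀ s : Fin r × Bool,
      (FreeGroup.mk [s])⁻¹ = FreeGroup.mk [(s.1, !s.2)] := by
    intro s; rw [FreeGroup.inv_mk]; rfl
  simp only [hinv]
  have hre := Fintype.sum_equiv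
    (⟨fun s : Fin r × Bool => (s.1, !s.2), fun s => (s.1, !s.2),
      fun s => by simp, fun s => by simp⟩ : (Fin r × Bool) ≃ (Fin r × Bool))
    (fun s : Fin r × Bool => 1 / (q + 1) * (μ (k + 1)).coeff (FreeGroup.mk [s] * z))
    (fun s : Fin r × Bool => 1 / (q + 1) * (μ (k + 1)).coeff (FreeGroup.mk [(s.1, !s.2)] * z))
    (fun s => by simp)
  rw [← hre]
  rw [MonoidAlgebra.coeff_add, MonoidAlgebra.coeff_smul, MonoidAlgebra.coeff_smul, Finsupp.add_apply, Finsupp.smul_apply, Finsupp.smul_apply, smul_eq_mul, smul_eq_mul]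
  simp only [hμ (k + 1) (by omega)]
  simp only [Nat.add_sub_cancel]
  rcases h : z.toWord with _ | ⟨hd, tl⟩
  · -- z = 1
    have hz1 : z = 1 := FreeGroup.toWord_eq_nil_iff.mp h
    have hwz : wordLength z = 0 := by unfold wordLength; rw [h]; rfl
    simp only [wordLength_single_mul_nil _ z h]
    rw [Finset.sum_const, Finset.card_univ]
    simp only [Fintype.card_prod, Fintype.card_fin, Fintype.card_bool]
    rw [hμ (k + 1 + 1) (by omega) z, hwz]
    rcases k with _ | k'
    · rw [hμ0, hz1]
      simp only [MonoidAlgebra.one_def, MonoidAlgebra.coeff_single, Finsupp.single_apply]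
      rw [nsmul_eq_mul]
      have h2r : ((r * 2 : ℕ) : ℂ) = q + 1 := by rw [hq1nat]; push_cast; ring
      rw [h2r]
      norm_num
      field_simp
    · rw [hμ (k' + 1) (by omega) z, hwz]
      rw [if_neg (show ¬(1 = k' + 1 + 1) by omega),
          if_neg (show ¬(0 = k' + 1) by omega),
          if_neg (show ¬(0 = k' + 1 + 1 + 1) by omega)]
      simp
  · -- z ≠ 1, first letter hd
    have hwz : wordLength z = tl.length + 1 := by unfold wordLength; rw [h]; rfl
    have hz1 : z ≠ 1 := by
      intro hz; rw [hz, FreeGroup.toWord_one] at h; exact List.cons_ne_nil hd tl h.symm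
    simp only [wordLength_single_mul_cons _ z hd tl h]
    set p : Fin r × Bool := (hd.1, !hd.2) with hp
    rw [← Finset.add_sum_erase Finset.univ _ (Finset.mem_univ p)]
    rw [if_pos rfl]
    rw [Finset.sum_congr rfl (fun s hs => by
      rw [if_neg (Finset.ne_of_mem_erase hs)]
      : ∀ s ∈ Finset.univ.erase p, _ = (1 / (q + 1) *
          if tl.length + 2 = k + 1 then 1 / ((q + 1) * q ^ k) else 0))]
    rw [Finset.sum_const, Finset.card_erase_of_mem (Finset.mem_univ p), Finset.card_univ]
    simp only [Fintype.card_prod, Fintype.card_fin, Fintype.card_bool]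
    rw [hμ (k + 1 + 1) (by omega) z, hwz]
    have hA : (μ k).coeff z = if tl.length + 2 = k + 1 then 1 / ((q + 1) * q ^ (k - 1)) else 0 := by
      rcases k with _ | k'
      · rw [hμ0]
        simp only [MonoidAlgebra.one_def, MonoidAlgebra.coeff_single, Finsupp.single_apply]
        rw [if_neg (fun hh => hz1 hh.symm), if_neg (show ¬(tl.length + 2 = 0 + 1) by omega)]
      · rw [hμ (k' + 1) (by omega) z, hwz]
        congr 1
        simp only [eq_iff_iff]
        omega
    rw [hA, nsmul_eq_mul]
    have hc : ((r * 2 - 1 : ℕ) : ℂ) = q := by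
      rw [hqnat]; congr 1; omega
    rw [hc]
    simp only [Nat.add_sub_cancel]
    by_cases h1 : tl.length = k + 1
    · rw [if_pos h1, if_neg (show ¬(tl.length + 2 = k + 1) by omega),
          if_neg (show ¬(tl.length + 2 = k + 1) by omega),
          if_pos (show tl.length + 1 = k + 1 + 1 by omega)]
      rw [pow_succ]
      exact aux1 q (q ^ k) hq0 hq1 (pow_ne_zero _ hq0)
    · rw [if_neg h1, if_neg (show ¬(tl.length + 1 = k + 1 + 1) by omega)]
      by_cases h2 : tl.length + 2 = k + 1
      · obtain ⟨m, rfl⟩ : ∃ m, k = m + 1 := ⟨tl.length, by omega⟩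
        rw [if_pos h2, if_pos h2]
        simp only [Nat.add_sub_cancel]
        rw [pow_succ]
        exact aux2 q (q ^ m) hq0 hq1 (pow_ne_zero _ hq0)
      · rw [if_neg h2, if_neg h2]
        simp
end
end

section
/- Let r ≥ 2 be a natural number, q = 2r − 1, and for n ≥ 1 let μₙ ∈ ℂ[F_r] be μₙ = (1/((q+1)q^{n−1})) ∑_{|x|=n} x, with μ₀ the identity. Let Pₙ be the polynomials defined by P₀(x) = 1, P₁(x) = x, P_{n+1}(x) = ((q+1)/q)·x·Pₙ(x) − (1/q)·P_{n−1}(x). Then μₙ = Pₙ(μ₁) in ℂ[F_r] for every n ∈ ℕ, where Pₙ(μ₁) denotes evaluation of the polynomial Pₙ at μ₁ in the algebra ℂ[F_r]. -/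
noncomputable section

/-- The spherical polynomials `Pₙ` (with complex coefficients) for the
parameter `q`: `P₀ = 1`, `P₁ = X`,
`P_{n+2} = ((q+1)/q)·X·P_{n+1} − (1/q)·Pₙ`. -/
def Ppoly (q : ℂ) : ℕ → Polynomial ℂ
  | 0 => 1
  | 1 => Polynomial.X
  | (n + 2) => Polynomial.C ((q + 1) / q) * (Polynomial.X * Ppoly q (n + 1))
      - Polynomial.C (1 / q) * Ppoly q n

namespace SphAux

variable {α : Type*} [DecidableEq α]

lemma inv_single (p : α × Bool) :
    (FreeGroup.mk [p])⁻¹ = FreeGroup.mk [(p.1, !p.2)] := by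
  rw [FreeGroup.inv_mk]
  simp [FreeGroup.invRev]

lemma toWord_single_mul_nil (p : α × Bool) (x : FreeGroup α) (hx : x.toWord = []) :
    (FreeGroup.mk [p] * x).toWord = [p] := by
  conv_lhs => rw [← FreeGroup.mk_toWord (x := x)]
  rw [FreeGroup.mul_mk, FreeGroup.toWord_mk, hx]
  rfl

lemma toWord_single_mul_cons (p hd : α × Bool) (tl : List (α × Bool)) (x : FreeGroup α)
    (hx : x.toWord = hd :: tl) :
    (FreeGroup.mk [p] * x).toWord =
      if p.1 = hd.1 ∧ p.2 = !hd.2 then tl else p :: hd :: tl := by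
  have hred : FreeGroup.reduce (hd :: tl) = hd :: tl := by
    rw [← hx]; exact FreeGroup.reduce_toWord x
  conv_lhs => rw [← FreeGroup.mk_toWord (x := x)]
  rw [FreeGroup.mul_mk, FreeGroup.toWord_mk, hx]
  show FreeGroup.reduce (p :: hd :: tl) = _
  rw [FreeGroup.reduce.cons, hred]

/-- Uniform value of `μ m`. -/
def cval (q : ℂ) : ℕ → ℂ
  | 0 => 1
  | (m + 1) => 1 / ((q + 1) * q ^ m)

end SphAux

open SphAux in
theorem mu_n_eq_P_n_mu_one (r : ℕ) (hr : 2 ≤ r) (q : ℂ) (hq : q = 2 * r - 1)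
    (μ : ℕ → MonoidAlgebra ℂ (FreeGroup (Fin r)))
    (hμ0 : μ 0 = 1)
    (hμ : ∀ n : ℕ, 1 ≤ n → ∀ x : FreeGroup (Fin r),
      (μ n).coeff x = if wordLength x = n then 1 / ((q + 1) * q ^ (n - 1)) else 0)
    (n : ℕ) :
    Polynomial.aeval (μ 1) (Ppoly q n) = μ n := by
  -- basic facts about q
  have hq1 : ((2 * r : ℕ) : ℂ) = q + 1 := by rw [hq]; push_cast; ring
  have hq1ne : q + 1 ≠ 0 := by
    rw [← hq1]
    exact_mod_cast Nat.cast_ne_zero.mpr (by omega : (2 * r : ℕ) ≠ 0)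
  have hq0 : q ≠ 0 := by
    intro h
    rw [h, zero_add] at hq1
    have : (2 * r : ℕ) = 1 := by exact_mod_cast hq1
    omega
  -- uniform value lemma
  have happ : ∀ (m : ℕ) (x : FreeGroup (Fin r)),
      (μ m).coeff x = if wordLength x = m then cval q m else 0 := by
    intro m x
    cases m with
    | zero =>
      rw [hμ0]
      have hiff : wordLength x = 0 ↔ x = 1 := by
        rw [wordLength, List.length_eq_zero_iff, FreeGroup.toWord_eq_nil_iff]
      rw [MonoidAlgebra.one_def, MonoidAlgebra.coeff_single, Finsupp.single_apply]
      by_cases hx : x = 1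
      · rw [if_pos hx.symm, if_pos (hiff.mpr hx)]; rfl
      · rw [if_neg (fun h => hx h.symm), if_neg (fun h => hx (hiff.mp h))]
    | succ m =>
      rw [hμ (m + 1) (by omega) x]
      simp [cval]
  -- μ 1 as a sum of singles
  have hμ1 : μ 1 = ∑ p : Fin r × Bool,
      MonoidAlgebra.single (FreeGroup.mk [p]) (1 / (q + 1)) := by
    refine MonoidAlgebra.ext (Finsupp.ext fun x => ?_)
    rw [MonoidAlgebra.coeff_sum, Finsupp.finset_sum_apply, hμ 1 le_rfl x]
    have hiff : ∀ p : Fin r × Bool, FreeGroup.mk [p] = x ↔ [p] = x.toWord := by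
      intro p
      rw [← FreeGroup.toWord_inj, FreeGroup.toWord_mk, FreeGroup.reduce_singleton]
    simp only [MonoidAlgebra.coeff_single, Finsupp.single_apply, hiff]
    rcases hx : x.toWord with _ | ⟨hd, tl⟩
    · simp [wordLength, hx]
    · rcases tl with _ | ⟨a, tl'⟩
      · have hcond : ∀ p : Fin r × Bool, ([p] = x.toWord) ↔ p = hd := by
          intro p; rw [hx]; simp
        simp [hcond, wordLength, hx, Finset.sum_ite_eq']
      · simp [wordLength, hx]
  -- the convolution identity
  have conv : ∀ m : ℕ,
      μ 1 * μ (m + 1) = (1 / (q + 1)) • μ m + (q / (q + 1)) • μ (m + 2) := by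
    intro m
    refine MonoidAlgebra.ext (Finsupp.ext fun x => ?_)
    rw [hμ1, Finset.sum_mul, MonoidAlgebra.coeff_sum, Finsupp.finset_sum_apply]
    simp only [MonoidAlgebra.coeff_single_mul_apply]
    rw [MonoidAlgebra.coeff_add, Finsupp.add_apply, MonoidAlgebra.coeff_smul,
      MonoidAlgebra.coeff_smul, Finsupp.smul_apply, Finsupp.smul_apply, smul_eq_mul,
      smul_eq_mul, happ m x, happ (m + 2) x]
    rcases hx : x.toWord with _ | ⟨hd, tl⟩
    · -- x = 1
      have hlen : ∀ p : Fin r × Bool,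
          wordLength ((FreeGroup.mk [p])⁻¹ * x) = 1 := by
        intro p
        rw [inv_single, wordLength, toWord_single_mul_nil _ _ hx]
        rfl
      have hx0 : wordLength x = 0 := by simp [wordLength, hx]
      simp only [happ (m + 1), hlen, hx0]
      rw [Finset.sum_const, if_neg (by omega : ¬ (0 : ℕ) = m + 2)]
      by_cases hm : m = 0
      · subst hm
        rw [if_pos rfl, if_pos rfl]
        have hcard : (Finset.univ : Finset (Fin r × Bool)).card = 2 * r := by
          simp [Finset.card_univ, mul_comm]
        rw [hcard, nsmul_eq_mul, hq1]
        simp only [cval]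
        field_simp
        simp
      · rw [if_neg (by omega : ¬ (1 : ℕ) = m + 1), if_neg (by omega : ¬ (0 : ℕ) = m)]
        simp
    · -- x ≠ 1, first letter hd
      have hlen : ∀ p : Fin r × Bool,
          wordLength ((FreeGroup.mk [p])⁻¹ * x)
            = if p = hd then tl.length else tl.length + 2 := by
        intro p
        rw [inv_single, wordLength, toWord_single_mul_cons _ _ _ _ hx]
        by_cases hp : p = hd
        · rw [if_pos (by rw [hp]; exact ⟨rfl, rfl⟩), if_pos hp]
        · rw [if_neg, if_neg hp]
          · simp
          · rintro ⟨h1, h2⟩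
            exact hp (Prod.ext h1 (Bool.not_inj h2))
      have hxk : wordLength x = tl.length + 1 := by simp [wordLength, hx]
      set k := tl.length with hk
      simp only [happ (m + 1), hlen, hxk]
      have hsummand : ∀ p : Fin r × Bool,
          (1 / (q + 1)) * (if (if p = hd then k else k + 2) = m + 1 then cval q (m + 1) else 0)
          = (1 / (q + 1)) * (if k + 2 = m + 1 then cval q (m + 1) else 0)
            + (if p = hd then
                (1 / (q + 1)) * (if k = m + 1 then cval q (m + 1) else 0)
                - (1 / (q + 1)) * (if k + 2 = m + 1 then cval q (m + 1) else 0) else 0) := by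
        intro p
        by_cases hp : p = hd
        · simp only [if_pos hp]; ring
        · simp only [if_neg hp]; ring
      rw [Finset.sum_congr rfl (fun p _ => hsummand p), Finset.sum_add_distrib,
        Finset.sum_const, Finset.sum_ite_eq' Finset.univ hd, if_pos (Finset.mem_univ hd)]
      have hcard : (Finset.univ : Finset (Fin r × Bool)).card = 2 * r := by
        simp [Finset.card_univ, mul_comm]
      rw [hcard, nsmul_eq_mul, hq1]
      by_cases h1 : k = m + 1
      · rw [if_pos h1, if_neg (by omega : ¬ k + 2 = m + 1),
          if_neg (by omega : ¬ k + 1 = m), if_pos (by omega : k + 1 = m + 2)]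
        have hpm : q ^ m ≠ 0 := pow_ne_zero _ hq0
        simp only [cval, mul_zero, zero_add, add_zero, sub_zero]
        rw [pow_succ]
        field_simp
      · by_cases h2 : k + 1 = m
        · subst h2
          rw [if_neg h1, if_pos rfl, if_pos rfl, if_neg (by omega : ¬ k + 1 = k + 1 + 2)]
          have hpk : q ^ k ≠ 0 := pow_ne_zero _ hq0
          simp only [cval, mul_zero, zero_sub, add_zero, zero_add]
          rw [pow_succ]
          field_simp
          ring
        · rw [if_neg h1, if_neg (by omega : ¬ k + 2 = m + 1),
            if_neg h2, if_neg (by omega : ¬ k + 1 = m + 2)]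
          simp
  -- now induct
  induction n using Nat.twoStepInduction with
  | zero => simp [Ppoly, hμ0]
  | one => simp [Ppoly]
  | more n ih1 ih2 =>
    have hP : Ppoly q (n + 2) = Polynomial.C ((q + 1) / q) * (Polynomial.X * Ppoly q (n + 1))
        - Polynomial.C (1 / q) * Ppoly q n := rfl
    rw [hP, map_sub, map_mul, map_mul, map_mul, Polynomial.aeval_C, Polynomial.aeval_C,
      Polynomial.aeval_X, ih2, ih1, ← Algebra.smul_def, ← Algebra.smul_def, conv n]
    rw [smul_add, smul_smul, smul_smul,
      show (q + 1) / q * (1 / (q + 1)) = 1 / q by field_simp <;> ring,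
      show (q + 1) / q * (q / (q + 1)) = 1 by field_simp <;> ring]
    rw [one_smul]
    abel
end
end

section
/- Let r ≥ 2 be a natural number, q = 2r − 1, and let μₙ ∈ ℂ[F_r] be μₙ = (1/((q+1)q^{n−1})) ∑_{|x|=n} x for n ≥ 1, with μ₀ the identity. For a function φ: F_r → ℂ and a finitely supported function ψ ∈ ℂ[F_r] write ⟨ψ, φ⟩ = ∑_{x ∈ F_r} ψ(x)φ(x). Let φ: F_r → ℂ be a radial function, not identically zero. Then the following are equivalent: (1) φ(e) = 1 and there exists s ∈ ℂ such that φ̇(1) = s and φ̇(n+1) = ((q+1)/q)·s·φ̇(n) − (1/q)·φ̇(n−1) for all n ≥ 1 (i.e. φ is spherical); (2) ⟨μ_m * μ_n, φ⟩ = ⟨μ_m, φ⟩·⟨μ_n, φ⟩ for all m, n ∈ ℕ (i.e. the functional ψ ↦ ⟨ψ, φ⟩ is multiplicative on the algebra spanned by the μₙ). -/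
set_option linter.unusedSectionVars false
set_option linter.unusedTactic false
set_option linter.unreachableTactic false

noncomputable section

/-- The pairing `⟨ψ, φ⟩ = ∑_{x} ψ(x)·φ(x)` between a finitely supported
function `ψ` (an element of the group algebra) and an arbitrary function `φ`. -/
def pairing {r : ℕ} (ψ : MonoidAlgebra ℂ (FreeGroup (Fin r)))
    (φ : FreeGroup (Fin r) → ℂ) : ℂ :=
  Finsupp.sum ψ.coeff fun x c => c * φ x

section AuxWord

variable {α : Type*} [DecidableEq α]

lemma FGaux.wl_one : wordLength (1 : FreeGroup α) = 0 := by simp [wordLength]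

lemma FGaux.wl_eq_zero {x : FreeGroup α} : wordLength x = 0 ↔ x = 1 := by
  simp [wordLength, List.length_eq_zero_iff, FreeGroup.toWord_eq_nil_iff]

lemma FGaux.wl_inv (x : FreeGroup α) : wordLength x⁻¹ = wordLength x := by
  unfold wordLength
  rw [FreeGroup.toWord_inv, FreeGroup.invRev_length]

lemma FGaux.wl_single (l : α × Bool) : wordLength (FreeGroup.mk [l]) = 1 := by
  simp [wordLength, FreeGroup.toWord_mk, FreeGroup.reduce_singleton]

lemma FGaux.single_inv (l : α × Bool) :
    (FreeGroup.mk [(l.1, !l.2)])⁻¹ = FreeGroup.mk [l] := by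
  rw [FreeGroup.inv_mk]; simp [FreeGroup.invRev]

lemma FGaux.single_inv' (l : α × Bool) :
    (FreeGroup.mk [l])⁻¹ = FreeGroup.mk [(l.1, !l.2)] := by
  obtain ⟨a, b⟩ := l
  have := FGaux.single_inv (α := α) (a, !b)
  simp only [Bool.not_not] at this
  exact this

lemma FGaux.mul_single_eq (x : FreeGroup α) (l : α × Bool) :
    x * FreeGroup.mk [l] = (FreeGroup.mk [(l.1, !l.2)] * x⁻¹)⁻¹ := by
  rw [mul_inv_rev, inv_inv, FGaux.single_inv]

lemma FGaux.head?_inv_toWord (x : FreeGroup α) :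
    x⁻¹.toWord.head? = (x.toWord.getLast?).map fun g => (g.1, !g.2) := by
  rw [FreeGroup.toWord_inv]
  show ((x.toWord.map fun g => (g.1, !g.2)).reverse).head? = _
  rw [List.head?_reverse, List.getLast?_map]

lemma FGaux.toWord_single_mul (l : α × Bool) (x : FreeGroup α) :
    (FreeGroup.mk [l] * x).toWord =
      if x.toWord.head? = some (l.1, !l.2) then x.toWord.tail else l :: x.toWord := by
  conv_lhs => rw [← FreeGroup.mk_toWord (x := x), FreeGroup.mul_mk]
  rw [List.singleton_append, FreeGroup.toWord_mk, FreeGroup.reduce.cons,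
    FreeGroup.reduce_toWord]
  cases h : x.toWord with
  | nil => simp
  | cons hd tl =>
    simp only [List.head?_cons, List.tail_cons]
    by_cases hc : hd = (l.1, !l.2)
    · subst hc; simp
    · have : ¬ (l.1 = hd.1 ∧ l.2 = !hd.2) := by
        rintro ⟨h1, h2⟩; exact hc (by ext <;> simp [← h1, h2])
      simp [this, hc]

lemma FGaux.cond_iff (x : FreeGroup α) (l : α × Bool) :
    x⁻¹.toWord.head? = some ((l.1, !l.2).1, !(l.1, !l.2).2) ↔
      x.toWord.getLast? = some (l.1, !l.2) := by
  rw [FGaux.head?_inv_toWord]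
  cases h : x.toWord.getLast? with
  | none => simp
  | some L =>
    obtain ⟨a, b⟩ := L; obtain ⟨c, d⟩ := l
    simp only [Option.map_some, Option.some_inj, Prod.mk.injEq, Option.map_some]
    cases b <;> cases d <;> simp [eq_comm]

lemma FGaux.wl_mul_single (x : FreeGroup α) (l : α × Bool) :
    wordLength (x * FreeGroup.mk [l]) =
      if x.toWord.getLast? = some (l.1, !l.2) then wordLength x - 1 else wordLength x + 1 := by
  rw [FGaux.mul_single_eq, FGaux.wl_inv]
  unfold wordLength
  rw [FGaux.toWord_single_mul]
  have hlen : x⁻¹.toWord.length = x.toWord.length := FGaux.wl_inv x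
  by_cases hc : x.toWord.getLast? = some (l.1, !l.2)
  · rw [if_pos ((FGaux.cond_iff x l).mpr hc), if_pos hc, List.length_tail, hlen]
  · rw [if_neg (fun h => hc ((FGaux.cond_iff x l).mp h)), if_neg hc, List.length_cons, hlen]

lemma FGaux.toWord_mul_single (x : FreeGroup α) (l : α × Bool)
    (h : x.toWord.getLast? ≠ some (l.1, !l.2)) :
    (x * FreeGroup.mk [l]).toWord = x.toWord ++ [l] := by
  rw [FGaux.mul_single_eq, FreeGroup.toWord_inv, FGaux.toWord_single_mul,
    if_neg (fun hh => h ((FGaux.cond_iff x l).mp hh))]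
  show FreeGroup.invRev ((l.1, !l.2) :: x⁻¹.toWord) = _
  have : FreeGroup.invRev ((l.1, !l.2) :: x⁻¹.toWord)
      = FreeGroup.invRev (x⁻¹.toWord) ++ [((l.1 : α), !!l.2)] := by
    simp [FreeGroup.invRev]
  rw [this, ← FreeGroup.toWord_inv, inv_inv]
  simp

lemma FGaux.exists_bad (x : FreeGroup α) (hx : x ≠ 1) :
    ∃ B : α × Bool, ∀ l : α × Bool, wordLength (x * FreeGroup.mk [l]) =
      if l = B then wordLength x - 1 else wordLength x + 1 := by
  have hw : x.toWord ≠ [] := fun h => hx (FreeGroup.toWord_eq_nil_iff.mp h)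
  obtain ⟨L, hL⟩ : ∃ L, x.toWord.getLast? = some L :=
    ⟨x.toWord.getLast hw, List.getLast?_eq_getLast hw⟩
  refine ⟨(L.1, !L.2), fun l => ?_⟩
  rw [FGaux.wl_mul_single, hL]
  congr 1
  obtain ⟨a, b⟩ := L; obtain ⟨c, d⟩ := l
  simp only [Option.some_inj, Prod.mk.injEq, eq_iff_iff]
  cases b <;> cases d <;> simp [eq_comm]

lemma FGaux.single_injective :
    Function.Injective (fun l : α × Bool => FreeGroup.mk [l]) := by
  intro l l' h
  have := congrArg FreeGroup.toWord h
  simpa [FreeGroup.toWord_mk, FreeGroup.reduce_singleton] using this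

lemma FGaux.mem_sphere_one {y : FreeGroup α} :
    wordLength y = 1 ↔ ∃ l : α × Bool, y = FreeGroup.mk [l] := by
  constructor
  · intro h
    obtain ⟨l, hl⟩ := List.length_eq_one_iff.mp h
    exact ⟨l, by rw [← FreeGroup.mk_toWord (x := y), hl]⟩
  · rintro ⟨l, rfl⟩; exact FGaux.wl_single l

variable [Fintype α]

lemma FGaux.letter_sum (x : FreeGroup α) (hx : x ≠ 1) (f : ℕ → ℂ) :
    ∑ l : α × Bool, f (wordLength (x * FreeGroup.mk [l]))
      = f (wordLength x - 1)
        + (2 * (Fintype.card α : ℂ) - 1) * f (wordLength x + 1) := by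
  obtain ⟨B, hB⟩ := FGaux.exists_bad x hx
  have h : ∀ l : α × Bool, f (wordLength (x * FreeGroup.mk [l]))
      = (if l = B then f (wordLength x - 1) - f (wordLength x + 1) else 0)
        + f (wordLength x + 1) := by
    intro l; rw [hB l]; by_cases h : l = B <;> simp [h]
  rw [Finset.sum_congr rfl fun l _ => h l, Finset.sum_add_distrib,
    Finset.sum_ite_eq' Finset.univ B fun _ => _]
  simp [Fintype.card_prod, mul_comm]
  ring

lemma FGaux.sphere_one_eq (s : Finset (FreeGroup α)) (hs : ∀ x, x ∈ s ↔ wordLength x = 1) :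
    s = Finset.image (fun l : α × Bool => FreeGroup.mk [l]) Finset.univ := by
  ext y
  simp [hs, FGaux.mem_sphere_one, eq_comm]

lemma FGaux.card_sphere_one (s : Finset (FreeGroup α)) (hs : ∀ x, x ∈ s ↔ wordLength x = 1) :
    s.card = 2 * Fintype.card α := by
  rw [FGaux.sphere_one_eq s hs, Finset.card_image_of_injective _ FGaux.single_injective]
  simp [Fintype.card_prod, mul_comm]

lemma FGaux.card_sphere_succ (n : ℕ) (hn : 1 ≤ n) (s t : Finset (FreeGroup α))
    (hs : ∀ x, x ∈ s ↔ wordLength x = n) (ht : ∀ x, x ∈ t ↔ wordLength x = n + 1) :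
    t.card = s.card * (2 * Fintype.card α - 1) := by
  classical
  set T := (s ×ˢ (Finset.univ : Finset (α × Bool))).filter
    (fun p => wordLength (p.1 * FreeGroup.mk [p.2]) = n + 1) with hT
  have hTcard : T.card = t.card := by
    apply Finset.card_bij (fun p _ => p.1 * FreeGroup.mk [p.2])
    · intro p hp
      rw [hT, Finset.mem_filter] at hp
      exact (ht _).mpr hp.2
    · rintro ⟨x, l⟩ hp ⟨x', l'⟩ hp' heq
      rw [hT, Finset.mem_filter, Finset.mem_product] at hp hp'
      have hx : wordLength x = n := (hs _).mp hp.1.1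
      have hx' : wordLength x' = n := (hs _).mp hp'.1.1
      have hnc : x.toWord.getLast? ≠ some (l.1, !l.2) := by
        intro hcon
        have h := FGaux.wl_mul_single x l
        rw [if_pos hcon, hx] at h
        rw [hp.2] at h
        omega
      have hnc' : x'.toWord.getLast? ≠ some (l'.1, !l'.2) := by
        intro hcon
        have h := FGaux.wl_mul_single x' l'
        rw [if_pos hcon, hx'] at h
        rw [hp'.2] at h
        omega
      have hw := congrArg FreeGroup.toWord heq
      rw [FGaux.toWord_mul_single x l hnc, FGaux.toWord_mul_single x' l' hnc'] at hw
      have hlen : x.toWord.length = x'.toWord.length := hx.trans hx'.symm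
      obtain ⟨h1, h2⟩ := List.append_inj hw hlen
      have : x = x' := FreeGroup.toWord_injective h1
      simp_all
    · intro z hz
      have hzl : wordLength z = n + 1 := (ht _).mp hz
      have hz1 : z ≠ 1 := by
        intro h; rw [h] at hzl; rw [FGaux.wl_eq_zero.mpr rfl] at hzl; omega
      have hw : z.toWord ≠ [] := fun h => hz1 (FreeGroup.toWord_eq_nil_iff.mp h)
      obtain ⟨L, hL⟩ : ∃ L, z.toWord.getLast? = some L :=
        ⟨z.toWord.getLast hw, List.getLast?_eq_getLast hw⟩
      have hback : z * FreeGroup.mk [(L.1, !L.2)] * FreeGroup.mk [L] = z := by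
        have h2 : FreeGroup.mk [((L.1 : α), !L.2)] = (FreeGroup.mk [L])⁻¹ := by
          rw [← FGaux.single_inv L, inv_inv]
        rw [h2, mul_assoc, inv_mul_cancel, mul_one]
      have hxlen : wordLength (z * FreeGroup.mk [(L.1, !L.2)]) = n := by
        rw [FGaux.wl_mul_single, if_pos (by rw [hL]; simp), hzl]
        omega
      refine ⟨(z * FreeGroup.mk [(L.1, !L.2)], L), ?_, hback⟩
      rw [hT, Finset.mem_filter, Finset.mem_product]
      refine ⟨⟨(hs _).mpr hxlen, Finset.mem_univ _⟩, ?_⟩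
      show wordLength (z * FreeGroup.mk [(L.1, !L.2)] * FreeGroup.mk [L]) = n + 1
      rw [hback, hzl]
  have hTcount : T.card = s.card * (2 * Fintype.card α - 1) := by
    rw [hT, Finset.card_filter, Finset.sum_product]
    have hinner : ∀ x ∈ s, (∑ l : α × Bool,
        if wordLength (x * FreeGroup.mk [l]) = n + 1 then 1 else 0)
          = 2 * Fintype.card α - 1 := by
      intro x hx
      have hxn : wordLength x = n := (hs _).mp hx
      have hx1 : x ≠ 1 := by
        intro h; rw [h, FGaux.wl_eq_zero.mpr rfl] at hxn; omega
      obtain ⟨B, hB⟩ := FGaux.exists_bad x hx1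
      have hterm : ∀ l : α × Bool,
          (if wordLength (x * FreeGroup.mk [l]) = n + 1 then (1:ℕ) else 0)
            = if l ≠ B then 1 else 0 := by
        intro l
        rw [hB l, hxn]
        by_cases h : l = B <;> simp [h] <;> omega
      rw [Finset.sum_congr rfl fun l _ => hterm l, ← Finset.card_filter,
        Finset.filter_ne', Finset.card_erase_of_mem (Finset.mem_univ _)]
      simp [Fintype.card_prod]
      omega
    rw [Finset.sum_congr rfl hinner, Finset.sum_const, smul_eq_mul]
  omega

end AuxWord

section AuxPairing

variable {r : ℕ}

lemma pairing_eq (ψ : MonoidAlgebra ℂ (FreeGroup (Fin r))) (φ : FreeGroup (Fin r) → ℂ) :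
    pairing ψ φ = Finsupp.linearCombination ℂ φ ψ.coeff := by
  rw [pairing, Finsupp.linearCombination_apply]
  simp [smul_eq_mul]

lemma pairing_single (g : FreeGroup (Fin r)) (c : ℂ) (φ : FreeGroup (Fin r) → ℂ) :
    pairing (MonoidAlgebra.single g c) φ = c * φ g := by
  rw [pairing, MonoidAlgebra.coeff_single, Finsupp.sum_single_index]
  simp

lemma pairing_smul (c : ℂ) (ψ : MonoidAlgebra ℂ (FreeGroup (Fin r))) (φ : FreeGroup (Fin r) → ℂ) :
    pairing (c • ψ) φ = c * pairing ψ φ := by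
  simp [pairing_eq, MonoidAlgebra.coeff_smul, map_smul]

lemma pairing_add (ψ χ : MonoidAlgebra ℂ (FreeGroup (Fin r))) (φ : FreeGroup (Fin r) → ℂ) :
    pairing (ψ + χ) φ = pairing ψ φ + pairing χ φ := by
  simp [pairing_eq, MonoidAlgebra.coeff_add, map_add]

lemma pairing_sub (ψ χ : MonoidAlgebra ℂ (FreeGroup (Fin r))) (φ : FreeGroup (Fin r) → ℂ) :
    pairing (ψ - χ) φ = pairing ψ φ - pairing χ φ := by
  simp [pairing_eq, MonoidAlgebra.coeff_sub, map_sub]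

lemma pairing_sum {ι : Type*} (s : Finset ι) (f : ι → MonoidAlgebra ℂ (FreeGroup (Fin r)))
    (φ : FreeGroup (Fin r) → ℂ) :
    pairing (∑ i ∈ s, f i) φ = ∑ i ∈ s, pairing (f i) φ := by
  simp [pairing_eq, MonoidAlgebra.coeff_sum, map_sum]

lemma pairing_mul (ψ χ : MonoidAlgebra ℂ (FreeGroup (Fin r))) (φ : FreeGroup (Fin r) → ℂ) :
    pairing (ψ * χ) φ
      = ∑ a ∈ ψ.coeff.support, ∑ b ∈ χ.coeff.support, ψ.coeff a * χ.coeff b * φ (a * b) := by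
  rw [MonoidAlgebra.mul_def, Finsupp.sum]
  rw [pairing_sum]
  refine Finset.sum_congr rfl fun a _ => ?_
  rw [Finsupp.sum, pairing_sum]
  refine Finset.sum_congr rfl fun b _ => ?_
  rw [pairing_single]

end AuxPairing

theorem spherical_iff_multiplicative (r : ℕ) (hr : 2 ≤ r) (q : ℂ) (hq : q = 2 * r - 1)
    (μ : ℕ → MonoidAlgebra ℂ (FreeGroup (Fin r)))
    (hμ0 : μ 0 = 1)
    (hμ : ∀ n : ℕ, 1 ≤ n → ∀ x : FreeGroup (Fin r),
      (μ n).coeff x = if wordLength x = n then 1 / ((q + 1) * q ^ (n - 1)) else 0)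
    (φ : FreeGroup (Fin r) → ℂ) (φd : ℕ → ℂ)
    (hrad : ∀ x : FreeGroup (Fin r), φ x = φd (wordLength x))
    (hne : φ ≠ 0) :
    ((φ 1 = 1 ∧ ∃ s : ℂ, φd 1 = s ∧ ∀ n : ℕ, 1 ≤ n →
        φd (n + 1) = ((q + 1) / q) * s * φd n - (1 / q) * φd (n - 1)) ↔
      ∀ m n : ℕ, pairing (μ m * μ n) φ = pairing (μ m) φ * pairing (μ n) φ) := by
  classical
  -- basic arithmetic facts
  have hcardfin : (Fintype.card (Fin r) : ℂ) = (r : ℂ) := by simp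
  have h2r : ((2 * r : ℕ) : ℂ) = q + 1 := by push_cast; rw [hq]; ring
  have hq1_ne : q + 1 ≠ 0 := by
    rw [← h2r]
    have : (2 * r : ℕ) ≠ 0 := by omega
    exact_mod_cast this
  have hq_ne : q ≠ 0 := by
    intro h
    have h1 : ((2 * r : ℕ) : ℂ) = ((1 : ℕ) : ℂ) := by rw [h2r, h]; simp
    have h2 : (2 * r : ℕ) = 1 := Nat.cast_inj.mp h1
    omega
  have hqpow_ne : ∀ k : ℕ, q ^ k ≠ 0 := fun k => pow_ne_zero k hq_ne
  have h2r1 : ((2 * r - 1 : ℕ) : ℂ) = q := by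
    rw [Nat.cast_sub (by omega)]
    push_cast
    rw [hq]
  -- wordLength of 1
  have hwl1 : wordLength (1 : FreeGroup (Fin r)) = 0 := FGaux.wl_one
  have hφ1 : φ 1 = φd 0 := by rw [hrad 1, hwl1]
  -- support description
  have hS : ∀ n : ℕ, 1 ≤ n → ∀ x : FreeGroup (Fin r),
      x ∈ (μ n).coeff.support ↔ wordLength x = n := by
    intro n hn x
    rw [Finsupp.mem_support_iff, hμ n hn]
    constructor
    · intro h
      by_contra hc
      rw [if_neg hc] at h
      exact h rfl
    · intro h
      rw [if_pos h]
      exact one_div_ne_zero (mul_ne_zero hq1_ne (hqpow_ne _))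
  -- cardinality of spheres
  have hcard : ∀ n : ℕ, 1 ≤ n → (((μ n).coeff.support.card : ℂ)) = (q + 1) * q ^ (n - 1) := by
    intro n hn
    induction n with
    | zero => omega
    | succ n ih =>
      by_cases hn1 : n = 0
      · subst hn1
        rw [FGaux.card_sphere_one _ (hS 1 le_rfl), Fintype.card_fin,
          show (1 : ℕ) - 1 = 0 from rfl, pow_zero, mul_one]
        exact h2r
      · have hn' : 1 ≤ n := by omega
        rw [FGaux.card_sphere_succ n hn' (μ n).coeff.support (μ (n+1)).coeff.support
            (hS n hn') (hS (n+1) (by omega)), Fintype.card_fin, Nat.cast_mul,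
          h2r1, ih hn', show n + 1 - 1 = n from rfl, mul_assoc]
        congr 1
        rw [← pow_succ]
        congr 1
        omega
  -- pairing values
  have htall : ∀ n : ℕ, pairing (μ n) φ = φd n := by
    intro n
    by_cases hn : n = 0
    · subst hn
      rw [hμ0, MonoidAlgebra.one_def, pairing_single, one_mul, hφ1]
    · have hn' : 1 ≤ n := by omega
      rw [pairing, Finsupp.sum]
      have h1 : ∀ x ∈ (μ n).coeff.support, (μ n).coeff x * φ x = (1/((q+1)*q^(n-1))) * φd n := by
        intro x hx
        have hxl := (hS n hn' x).mp hx
        rw [hμ n hn', if_pos hxl, hrad x, hxl]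
      rw [Finset.sum_congr rfl h1, Finset.sum_const, nsmul_eq_mul, hcard n hn']
      field_simp
  -- μ 1 as a sum of singles
  have hmu1 : μ 1 = ∑ l : Fin r × Bool,
      MonoidAlgebra.single (FreeGroup.mk [l]) (1/(q+1)) := by
    ext z
    rw [hμ 1 le_rfl, MonoidAlgebra.coeff_sum, Finsupp.finset_sum_apply]
    by_cases hz : wordLength z = 1
    · obtain ⟨l₀, rfl⟩ := FGaux.mem_sphere_one.mp hz
      rw [if_pos hz]
      have h1 : ∀ l : Fin r × Bool,
          (MonoidAlgebra.single (FreeGroup.mk [l]) ((1:ℂ)/(q+1))).coeff (FreeGroup.mk [l₀])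
            = if l = l₀ then 1/(q+1) else 0 := by
        intro l
        rw [MonoidAlgebra.coeff_single, Finsupp.single_apply]
        congr 1
        simp only [eq_iff_iff]
        exact ⟨fun h => FGaux.single_injective h, fun h => by rw [h]⟩
      rw [Finset.sum_congr rfl fun l _ => h1 l,
        Finset.sum_ite_eq' Finset.univ l₀ fun _ => (1:ℂ)/(q+1),
        if_pos (Finset.mem_univ _)]
      norm_num
    · rw [if_neg hz]
      symm
      apply Finset.sum_eq_zero
      intro l _
      rw [MonoidAlgebra.coeff_single, Finsupp.single_apply, if_neg]
      intro h
      apply hz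
      rw [← h]
      exact FGaux.wl_single l
  -- the key convolution identity
  have hkey : ∀ n : ℕ, 1 ≤ n →
      (q/(q+1)) • μ (n+1) + (1/(q+1)) • μ (n-1) = μ n * μ 1 := by
    intro n hn
    ext z
    have hR : (μ n * μ 1).coeff z = ∑ l : Fin r × Bool,
        (fun k => (if k = n then (1:ℂ)/((q+1)*q^(n-1)) else 0) * (1/(q+1)))
          (wordLength (z * FreeGroup.mk [l])) := by
      conv_lhs => rw [hmu1]
      rw [Finset.mul_sum, MonoidAlgebra.coeff_sum, Finsupp.finset_sum_apply]
      have h1 : ∀ l : Fin r × Bool,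
          (μ n * MonoidAlgebra.single (FreeGroup.mk [l]) ((1:ℂ)/(q+1))).coeff z
            = (μ n).coeff (z * FreeGroup.mk [(l.1, !l.2)]) * (1/(q+1)) := by
        intro l
        rw [MonoidAlgebra.coeff_mul_single_apply, FGaux.single_inv']
      rw [Finset.sum_congr rfl fun l _ => h1 l]
      have h2 : ∑ l : Fin r × Bool, (μ n).coeff (z * FreeGroup.mk [(l.1, !l.2)]) * (1/(q+1))
          = ∑ l : Fin r × Bool, (μ n).coeff (z * FreeGroup.mk [l]) * (1/(q+1)) := by
        exact Fintype.sum_equiv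
          ⟨fun l : Fin r × Bool => (l.1, !l.2), fun l => (l.1, !l.2),
            fun l => by simp, fun l => by simp⟩
          _ _ (fun l => rfl)
      rw [h2]
      refine Finset.sum_congr rfl fun l _ => ?_
      simp only []
      rw [hμ n hn]
    rw [MonoidAlgebra.coeff_add, Finsupp.add_apply, MonoidAlgebra.coeff_smul_apply, MonoidAlgebra.coeff_smul_apply, smul_eq_mul,
      smul_eq_mul, hR, hμ (n+1) (by omega), show n + 1 - 1 = n from rfl]
    by_cases hz : z = 1
    · subst hz
      rw [hwl1, if_neg (by omega)]
      have hterm : ∀ l : Fin r × Bool,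
          (if wordLength ((1 : FreeGroup (Fin r)) * FreeGroup.mk [l]) = n
              then (1:ℂ)/((q+1)*q^(n-1)) else 0) * (1/(q+1))
            = (if n = 1 then ((1:ℂ)/((q+1)*q^(n-1))) * (1/(q+1)) else 0) := by
        intro l
        rw [one_mul, FGaux.wl_single]
        by_cases h : n = 1
        · subst h
          simp
        · rw [if_neg (fun hh => h hh.symm), if_neg h, zero_mul]
      rw [Finset.sum_congr rfl fun l _ => hterm l, Finset.sum_const,
        Finset.card_univ, nsmul_eq_mul]
      have hcu : ((Fintype.card (Fin r × Bool) : ℕ) : ℂ) = q + 1 := by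
        rw [Fintype.card_prod, Fintype.card_fin, Fintype.card_bool, ← h2r]
        push_cast
        ring
      rw [hcu]
      by_cases hn1 : n = 1
      · subst hn1
        rw [hμ0, MonoidAlgebra.one_def, MonoidAlgebra.coeff_single, Finsupp.single_apply, if_pos rfl, if_pos rfl]
        field_simp
        simp
      · rw [hμ (n-1) (by omega), hwl1, if_neg (by omega), if_neg hn1]
        ring
    · have hm1 : 1 ≤ wordLength z := by
        rcases Nat.eq_zero_or_pos (wordLength z) with h | h
        · exact absurd (FGaux.wl_eq_zero.mp h) hz
        · exact h
      rw [FGaux.letter_sum z hz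
        (fun k => (if k = n then (1:ℂ)/((q+1)*q^(n-1)) else 0) * (1/(q+1)))]
      beta_reduce
      rw [hcardfin]
      have h2q : 2 * (r:ℂ) - 1 = q := by rw [hq]
      rw [h2q]
      set m := wordLength z with hm
      by_cases hn1 : n = 1
      · subst hn1
        rw [hμ0, MonoidAlgebra.one_def, MonoidAlgebra.coeff_single, Finsupp.single_apply,
          if_neg (show ¬((1 : FreeGroup (Fin r)) = z) from fun h => hz h.symm),
          if_neg (show ¬(m + 1 = 1) by omega)]
        by_cases hm2 : m = 1 + 1
        · rw [if_pos hm2, if_pos (by omega : m - 1 = 1)]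
          norm_num
          field_simp
        · rw [if_neg hm2, if_neg (by omega : ¬(m - 1 = 1))]
          ring
      · have hn2 : 2 ≤ n := by omega
        rw [hμ (n-1) (by omega)]
        by_cases hA : m = n + 1
        · rw [if_pos hA, if_neg (by omega), if_pos (by omega : m - 1 = n),
            if_neg (by omega : ¬(m + 1 = n))]
          have hpow : q ^ n = q ^ (n-1) * q := by
            rw [← pow_succ]
            congr 1
            omega
          rw [hpow]
          field_simp [hq_ne, hq1_ne, hqpow_ne (n-1)]
          ring
        · by_cases hB : m = n - 1
          · rw [if_neg hA, if_pos hB, if_neg (by omega : ¬(m - 1 = n)),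
              if_pos (by omega : m + 1 = n)]
            have hpow : q ^ (n-1) = q ^ (n-2) * q := by
              rw [← pow_succ]
              congr 1
              omega
            rw [show n - 1 - 1 = n - 2 from by omega, hpow]
            field_simp [hq_ne, hq1_ne, hqpow_ne (n-2)]
            ring
          · rw [if_neg hA, if_neg hB, if_neg (by omega : ¬(m - 1 = n)),
              if_neg (by omega : ¬(m + 1 = n))]
            ring
  constructor
  · -- spherical → multiplicative
    rintro ⟨hφ1eq, s, hs1, hrec⟩
    have hφd0 : φd 0 = 1 := by rw [← hφ1, hφ1eq]
    have hpt : ∀ ψ : MonoidAlgebra ℂ (FreeGroup (Fin r)),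
        pairing (ψ * μ 1) φ = s * pairing ψ φ := by
      intro ψ
      rw [pairing_mul]
      have hsupp1 : (μ 1).coeff.support
          = Finset.image (fun l : Fin r × Bool => FreeGroup.mk [l]) Finset.univ :=
        FGaux.sphere_one_eq _ (hS 1 le_rfl)
      have hinner : ∀ a : FreeGroup (Fin r),
          (∑ b ∈ (μ 1).coeff.support, ψ.coeff a * (μ 1).coeff b * φ (a * b)) = ψ.coeff a * (s * φ a) := by
        intro a
        rw [hsupp1, Finset.sum_image (fun x _ y _ h => FGaux.single_injective h)]
        have h1 : ∀ l : Fin r × Bool,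
            ψ.coeff a * (μ 1).coeff (FreeGroup.mk [l]) * φ (a * FreeGroup.mk [l])
              = (ψ.coeff a * (1/(q+1))) * φd (wordLength (a * FreeGroup.mk [l])) := by
          intro l
          rw [hμ 1 le_rfl, if_pos (FGaux.wl_single l), hrad]
          norm_num
        rw [Finset.sum_congr rfl fun l _ => h1 l, ← Finset.mul_sum]
        by_cases ha : a = 1
        · subst ha
          have h2 : ∀ l : Fin r × Bool,
              φd (wordLength ((1 : FreeGroup (Fin r)) * FreeGroup.mk [l])) = s := by
            intro l
            rw [one_mul, FGaux.wl_single, hs1]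
          rw [Finset.sum_congr rfl fun l _ => h2 l, Finset.sum_const,
            Finset.card_univ, nsmul_eq_mul]
          have hcu : ((Fintype.card (Fin r × Bool) : ℕ) : ℂ) = q + 1 := by
            rw [Fintype.card_prod, Fintype.card_fin, Fintype.card_bool, ← h2r]
            push_cast
            ring
          rw [hcu, hφ1eq]
          field_simp
        · have hm1 : 1 ≤ wordLength a := by
            rcases Nat.eq_zero_or_pos (wordLength a) with h | h
            · exact absurd (FGaux.wl_eq_zero.mp h) ha
            · exact h
          rw [FGaux.letter_sum a ha φd, hcardfin, show 2*(r:ℂ) - 1 = q from by rw [hq]]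
          have h3 := hrec (wordLength a) hm1
          rw [hrad a, h3]
          field_simp
          ring
      rw [Finset.sum_congr rfl fun a _ => hinner a, pairing, Finsupp.sum,
        Finset.mul_sum]
      exact Finset.sum_congr rfl fun a _ => by ring
    have main : ∀ n m : ℕ, pairing (μ m * μ n) φ
        = pairing (μ m) φ * pairing (μ n) φ := by
      intro n
      induction n using Nat.strong_induction_on with
      | _ n ih =>
        rcases n with _ | n
        · intro m
          rw [hμ0, mul_one, ← hμ0, htall 0, hφd0, mul_one]
        · rcases n with _ | n
          · intro m
            rw [hpt (μ m), htall 1, hs1]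
            ring
          · intro m
            have key := hkey (n+1) (by omega)
            rw [show n + 1 + 1 = n + 2 from rfl, show n + 1 - 1 = n from rfl] at key
            have hL : pairing (μ m * ((q/(q+1)) • μ (n+2) + (1/(q+1)) • μ n)) φ
                = (q/(q+1)) * pairing (μ m * μ (n+2)) φ
                  + (1/(q+1)) * pairing (μ m * μ n) φ := by
              rw [mul_add, mul_smul_comm, mul_smul_comm, pairing_add,
                pairing_smul, pairing_smul]
            have hR2 : pairing (μ m * (μ (n+1) * μ 1)) φ
                = s * (pairing (μ m) φ * pairing (μ (n+1)) φ) := by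
              rw [← mul_assoc, hpt (μ m * μ (n+1)), ih (n+1) (by omega) m]
            have heq : (q/(q+1)) * pairing (μ m * μ (n+2)) φ
                + (1/(q+1)) * pairing (μ m * μ n) φ
                = s * (pairing (μ m) φ * pairing (μ (n+1)) φ) := by
              rw [← hL, key, hR2]
            rw [ih n (by omega) m] at heq
            set X := pairing (μ m * μ (n+2)) φ with hX
            set P := pairing (μ m) φ with hP
            rw [htall (n+1), htall n] at heq
            rw [htall (n+2)]
            have hr2 := hrec (n+1) (by omega)
            rw [show n + 1 + 1 = n + 2 from rfl, show n + 1 - 1 = n from rfl] at hr2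
            rw [hr2]
            have heq' : q * X + P * φd n = (q+1) * (s * (P * φd (n+1))) := by
              field_simp at heq
              linear_combination heq
            apply mul_left_cancel₀ hq_ne
            field_simp
            linear_combination heq'
    intro m n
    exact main n m
  · -- multiplicative → spherical
    intro H
    have hsq : φd 0 = φd 0 * φd 0 := by
      have h := H 0 0
      rw [hμ0, mul_one, ← hμ0, htall 0] at h
      exact h
    have hφd0 : φd 0 = 1 := by
      by_contra h1
      have h0 : φd 0 = 0 := by
        have h2 : φd 0 * (φd 0 - 1) = 0 := by linear_combination -hsq
        rcases mul_eq_zero.mp h2 with h | h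
        · exact h
        · exact absurd (by linear_combination h) h1
      have hall : ∀ k : ℕ, φd k = 0 := by
        intro k
        have h := H 0 k
        rw [hμ0, one_mul, ← hμ0, htall 0, htall k, h0, zero_mul] at h
        exact h
      exact hne (funext fun x => by rw [hrad x, hall]; rfl)
    refine ⟨by rw [hφ1, hφd0], φd 1, rfl, ?_⟩
    intro n hn
    have h := H n 1
    rw [← hkey n hn, pairing_add, pairing_smul, pairing_smul,
      htall (n+1), htall (n-1), htall n, htall 1] at h
    have h' : q * φd (n+1) + φd (n-1) = (q+1) * (φd n * φd 1) := by
      field_simp at h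
      linear_combination h
    field_simp
    linear_combination h'
end
end

section
/- Let F_∞ be the free group on countably infinitely many generators and let s be a real number. Then the function x ↦ s^{|x|} on F_∞ is positive definite if and only if −1 ≤ s ≤ 1. -/
open scoped ComplexOrder
noncomputable section

/-- A function on a group is positive definite if all the associated quadratic
sums are nonnegative (real) numbers. -/
def IsPositiveDefinite {G : Type*} [Group G] (φ : G → ℂ) : Prop :=
  ∀ (n : ℕ) (x : Fin n → G) (c : Fin n → ℂ),
    0 ≤ ∑ j, ∑ k, c j * (starRingEnd ℂ) (c k) * φ ((x k)⁻¹ * x j)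

namespace HaagerupAux

open List FreeGroup

abbrev Letter := ℕ × Bool

def Ok (a b : Letter) : Prop := ¬(a.1 = b.1 ∧ a.2 = !b.2)

lemma chain'_reduce (L : List Letter) : List.Chain' Ok (FreeGroup.reduce L) := by
  induction L with
  | nil => exact List.isChain_nil
  | cons x L ih =>
    rw [FreeGroup.reduce.cons]
    rcases h : FreeGroup.reduce L with _ | ⟨hd, tl⟩
    · exact List.isChain_singleton _
    · rw [h] at ih
      show List.Chain' Ok (if x.1 = hd.1 ∧ x.2 = !hd.2 then tl else x :: hd :: tl)
      by_cases hc : x.1 = hd.1 ∧ x.2 = !hd.2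
      · rw [if_pos hc]; exact ih.tail
      · rw [if_neg hc]; exact List.isChain_cons_cons.mpr ⟨hc, ih⟩

lemma reduce_eq_self {L : List Letter} (h : List.Chain' Ok L) : FreeGroup.reduce L = L := by
  induction L with
  | nil => rfl
  | cons x L ih =>
    rw [FreeGroup.reduce.cons, ih h.tail]
    rcases hL : L with _ | ⟨hd, tl⟩
    · rfl
    · have : Ok x hd := by
        rw [hL] at h; exact (List.isChain_cons_cons.mp h).1
      simp [Ok] at this
      by_cases h1 : x.1 = hd.1
      · simp [h1, this h1]
      · simp [h1]

lemma chain'_toWord (x : FreeGroup ℕ) : List.Chain' Ok x.toWord := by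
  rw [← FreeGroup.reduce_toWord]; exact chain'_reduce _

lemma chain'_drop {L : List Letter} (h : List.Chain' Ok L) (m : ℕ) :
    List.Chain' Ok (L.drop m) := by
  induction m generalizing L with
  | zero => simpa using h
  | succ m ih =>
    rw [← List.tail_drop]
    exact (ih h).tail

lemma chain'_invRev {L : List Letter} (h : List.Chain' Ok L) :
    List.Chain' Ok (FreeGroup.invRev L) := by
  show List.IsChain Ok _
  rw [FreeGroup.invRev, List.isChain_reverse, List.isChain_map]
  refine h.imp ?_
  intro a b hab
  simp only [flip, Ok, not_and, Bool.not_not] at hab ⊢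
  intro h1 h2
  exact hab h1.symm h2.symm

lemma getLast?_invRev (L : List Letter) :
    (FreeGroup.invRev L).getLast? = (L.head?).map (fun a => (a.1, !a.2)) := by
  rw [FreeGroup.invRev, List.getLast?_reverse, List.head?_map]

lemma chain'_invRev_append {u v : List Letter} (hu : List.Chain' Ok u)
    (hv : List.Chain' Ok v) (h : ∀ a ∈ u.head?, ∀ b ∈ v.head?, a ≠ b) :
    List.Chain' Ok (FreeGroup.invRev u ++ v) := by
  show List.IsChain Ok _
  rw [List.isChain_append]
  refine ⟨chain'_invRev hu, hv, ?_⟩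
  intro x hx y hy
  rw [getLast?_invRev] at hx
  rcases Option.map_eq_some_iff.mp hx with ⟨a, ha, rfl⟩
  have hne := h a ha y hy
  simp only [Ok, not_and]
  rintro h1 h2
  exact hne (by cases a; cases y; simp_all)

def cpl : List Letter → List Letter → ℕ
  | a :: l, b :: l' => if a = b then cpl l l' + 1 else 0
  | _, _ => 0

lemma cpl_le_left : ∀ w₁ w₂ : List Letter, cpl w₁ w₂ ≤ w₁.length
  | [], _ => by simp [cpl]
  | a :: l, [] => by simp [cpl]
  | a :: l, b :: l' => by
    rw [cpl]
    split
    · simpa using cpl_le_left l l'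
    · simp

lemma cpl_le_right : ∀ w₁ w₂ : List Letter, cpl w₁ w₂ ≤ w₂.length
  | [], _ => by simp [cpl]
  | a :: l, [] => by simp [cpl]
  | a :: l, b :: l' => by
    rw [cpl]
    split
    · simpa using cpl_le_right l l'
    · simp

lemma take_cpl : ∀ w₁ w₂ : List Letter, w₁.take (cpl w₁ w₂) = w₂.take (cpl w₁ w₂)
  | [], w₂ => by simp [cpl]
  | a :: l, [] => by simp [cpl]
  | a :: l, b :: l' => by
    rw [cpl]
    split
    · next hab => simp [hab, take_cpl l l']
    · simp

lemma cpl_max : ∀ (w₁ w₂ : List Letter) (a b : Letter),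
    w₁[cpl w₁ w₂]? = some a → w₂[cpl w₁ w₂]? = some b → a ≠ b
  | [], _, a, b => by simp [cpl]
  | a' :: l, [], a, b => by simp [cpl]
  | a' :: l, b' :: l', a, b => by
    rw [cpl]
    split
    · next hab =>
      simpa using cpl_max l l' a b
    · next hab =>
      simp only [List.getElem?_cons_zero, Option.some.injEq]
      rintro rfl rfl
      exact hab

lemma toWord_inv_mul (x y : FreeGroup ℕ) :
    (x⁻¹ * y).toWord =
      FreeGroup.invRev (x.toWord.drop (cpl x.toWord y.toWord)) ++
        y.toWord.drop (cpl x.toWord y.toWord) := by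
  set w₁ := x.toWord with hw₁
  set w₂ := y.toWord with hw₂
  set m := cpl w₁ w₂ with hm
  have hxy : x⁻¹ * y = (FreeGroup.mk (w₁.drop m))⁻¹ * FreeGroup.mk (w₂.drop m) := by
    have hx : x = FreeGroup.mk (w₁.take m) * FreeGroup.mk (w₁.drop m) := by
      rw [FreeGroup.mul_mk, List.take_append_drop, hw₁, FreeGroup.mk_toWord]
    have hy : y = FreeGroup.mk (w₁.take m) * FreeGroup.mk (w₂.drop m) := by
      rw [take_cpl w₁ w₂, ← hm, FreeGroup.mul_mk, List.take_append_drop, hw₂,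
        FreeGroup.mk_toWord]
    rw [hx, hy, mul_inv_rev]
    group
  rw [hxy, FreeGroup.inv_mk, FreeGroup.mul_mk, FreeGroup.toWord_mk]
  apply reduce_eq_self
  apply chain'_invRev_append (chain'_drop (chain'_toWord x) m)
    (chain'_drop (chain'_toWord y) m)
  intro a ha b hb
  rw [List.head?_drop] at ha hb
  exact cpl_max w₁ w₂ a b ha hb

lemma wordLength_inv_mul (x y : FreeGroup ℕ) :
    wordLength (x⁻¹ * y) =
      (wordLength x - cpl x.toWord y.toWord) + (wordLength y - cpl x.toWord y.toWord) := by
  rw [wordLength, toWord_inv_mul, List.length_append, FreeGroup.invRev_length,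
    List.length_drop, List.length_drop]
  rfl

end HaagerupAux

namespace HaagerupAux

open List FreeGroup Finset

/-- length of a common prefix is at most `cpl`. -/
lemma length_le_cpl {v w₁ w₂ : List Letter} (h₁ : v <+: w₁) (h₂ : v <+: w₂) :
    v.length ≤ cpl w₁ w₂ := by
  by_contra hlt
  push_neg at hlt
  set m := cpl w₁ w₂
  have hm1 : m < v.length := hlt
  have hva : v[m]? = some v[m] := List.getElem?_eq_getElem hm1
  have ha : w₁[m]? = v[m]? := by
    obtain ⟨t, rfl⟩ := h₁
    rw [List.getElem?_append_left hm1]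
  have hb : w₂[m]? = v[m]? := by
    obtain ⟨t, rfl⟩ := h₂
    rw [List.getElem?_append_left hm1]
  exact cpl_max w₁ w₂ _ _ (ha.trans hva) (hb.trans hva) rfl

/-- The Haagerup vectors. -/
def xi (s : ℝ) (x : FreeGroup ℕ) (v : List Letter) : ℝ :=
  if v = [] then s ^ wordLength x
  else if v <+: x.toWord then Real.sqrt (1 - s ^ 2) * s ^ (wordLength x - v.length) else 0

lemma geom (s : ℝ) : ∀ (m p q : ℕ), m ≤ p → m ≤ q →
    s ^ p * s ^ q + ∑ i ∈ Finset.range m,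
        (1 - s ^ 2) * (s ^ (p - (i + 1)) * s ^ (q - (i + 1)))
      = s ^ (p - m) * s ^ (q - m) := by
  intro m
  induction m with
  | zero => simp
  | succ m ih =>
    intro p q hp hq
    rw [Finset.sum_range_succ, ← add_assoc,
      ih p q (Nat.le_of_succ_le hp) (Nat.le_of_succ_le hq)]
    have e1 : p - m = (p - (m + 1)) + 1 := by omega
    have e2 : q - m = (q - (m + 1)) + 1 := by omega
    rw [e1, e2, pow_succ, pow_succ]
    ring

/-- Inner product formula. -/
lemma sum_xi {s : ℝ} (hs : s ^ 2 ≤ 1) (x y : FreeGroup ℕ) (T : Finset (List Letter))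
    (hx : ∀ i ≤ wordLength x, x.toWord.take i ∈ T) :
    ∑ v ∈ T, xi s x v * xi s y v = s ^ wordLength (x⁻¹ * y) := by
  have hs' : (0:ℝ) ≤ 1 - s ^ 2 := by linarith
  set m := cpl x.toWord y.toWord with hm
  have hm1 : m ≤ wordLength x := cpl_le_left x.toWord y.toWord
  have hm2 : m ≤ wordLength y := cpl_le_right x.toWord y.toWord
  have hmlen : m ≤ x.toWord.length := hm1
  set C : Finset (List Letter) := (Finset.range (m + 1)).image (fun i => x.toWord.take i)
    with hC
  have hCT : C ⊆ T := by
    intro v hv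
    simp only [hC, Finset.mem_image, Finset.mem_range] at hv
    obtain ⟨i, hi, rfl⟩ := hv
    exact hx i (by omega)
  have hinj : ∀ i ∈ Finset.range (m+1), ∀ j ∈ Finset.range (m+1),
      x.toWord.take i = x.toWord.take j → i = j := by
    intro i hi j hj hij
    rw [Finset.mem_range] at hi hj
    have : (x.toWord.take i).length = (x.toWord.take j).length := by rw [hij]
    rwa [List.length_take_of_le (by omega), List.length_take_of_le (by omega)] at this
  rw [← Finset.sum_subset hCT, hC, Finset.sum_image hinj, wordLength_inv_mul, ← hm, pow_add,
      ← geom s m (wordLength x) (wordLength y) hm1 hm2, Finset.sum_range_succ',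
      add_comm (s ^ wordLength x * s ^ wordLength y)]
  · congr 1
    apply Finset.sum_congr rfl
    intro i hi
    rw [Finset.mem_range] at hi
    have hi1 : i + 1 ≤ m := hi
    have hlen : (x.toWord.take (i + 1)).length = i + 1 :=
      List.length_take_of_le (by omega)
    have hne : x.toWord.take (i + 1) ≠ [] := by
      intro hcon; rw [hcon] at hlen; simp at hlen
    have hp1 : x.toWord.take (i + 1) <+: x.toWord := List.take_prefix _ _
    have hp2 : x.toWord.take (i + 1) <+: y.toWord := by
      have heq : x.toWord.take (i + 1) = y.toWord.take (i + 1) := by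
        calc x.toWord.take (i+1) = (x.toWord.take m).take (i+1) := by
              rw [List.take_take, min_eq_left hi1]
        _ = (y.toWord.take m).take (i+1) := by rw [take_cpl x.toWord y.toWord]
        _ = y.toWord.take (i+1) := by rw [List.take_take, min_eq_left hi1]
      rw [heq]; exact List.take_prefix _ _
    rw [xi, xi, if_neg hne, if_neg hne, if_pos hp1, if_pos hp2, hlen,
      mul_mul_mul_comm, Real.mul_self_sqrt hs']
  · intro v hvT hvC
    have hv0 : v ≠ [] := by
      rintro rfl
      exact hvC (Finset.mem_image.mpr ⟨0, by simp⟩)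
    by_cases hp1 : v <+: x.toWord
    · by_cases hp2 : v <+: y.toWord
      · exfalso
        have hle : v.length ≤ m := length_le_cpl hp1 hp2
        have hv : v = x.toWord.take v.length := List.prefix_iff_eq_take.mp hp1
        exact hvC (Finset.mem_image.mpr
          ⟨v.length, Finset.mem_range.mpr (by omega), hv.symm⟩)
      · have h0 : xi s y v = 0 := by rw [xi, if_neg hv0, if_neg hp2]
        rw [h0, mul_zero]
    · have h0 : xi s x v = 0 := by rw [xi, if_neg hv0, if_neg hp1]
      rw [h0, zero_mul]

end HaagerupAux

open HaagerupAux

theorem posdef_pow_iff (s : ℝ) :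
    IsPositiveDefinite (fun x : FreeGroup ℕ => ((s ^ wordLength x : ℝ) : ℂ)) ↔
      -1 ≤ s ∧ s ≤ 1 := by
  have w1 : wordLength (1 : FreeGroup ℕ) = 0 := by
    simp [wordLength, FreeGroup.toWord_one]
  have w2 : wordLength (FreeGroup.of 0 : FreeGroup ℕ) = 1 := by
    simp [wordLength, FreeGroup.toWord_of]
  have w3 : wordLength ((FreeGroup.of 0 : FreeGroup ℕ)⁻¹) = 1 := by
    simp [wordLength, FreeGroup.toWord_inv, FreeGroup.invRev_length, FreeGroup.toWord_of]
  constructor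
  · intro h
    have hA := h 2 ![1, FreeGroup.of 0] ![1, 1]
    have hB := h 2 ![1, FreeGroup.of 0] ![1, -1]
    simp only [Fin.sum_univ_two, Matrix.cons_val_zero, Matrix.cons_val_one, Matrix.head_cons,
      inv_one, one_mul, mul_one, inv_mul_cancel, map_one, map_neg, w1, w2, w3] at hA hB
    rw [show ((s ^ 0 : ℝ) : ℂ) + ((s ^ 1 : ℝ) : ℂ) + (((s ^ 1 : ℝ) : ℂ) + ((s ^ 0 : ℝ) : ℂ))
        = (((2 + 2 * s : ℝ)) : ℂ) by push_cast; ring] at hA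
    rw [show ((s ^ 0 : ℝ) : ℂ) + -1 * ((s ^ 1 : ℝ) : ℂ)
        + (-1 * ((s ^ 1 : ℝ) : ℂ) + -1 * -1 * ((s ^ 0 : ℝ) : ℂ))
        = (((2 - 2 * s : ℝ)) : ℂ) by push_cast; ring] at hB
    have hA' := Complex.zero_le_real.mp hA
    have hB' := Complex.zero_le_real.mp hB
    constructor <;> linarith
  · rintro ⟨h1, h2⟩
    have hs : s ^ 2 ≤ 1 := by nlinarith
    intro n x c
    set T : Finset (List Letter) := Finset.univ.biUnion
      (fun j : Fin n => (Finset.range (wordLength (x j) + 1)).image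
        (fun i => (x j).toWord.take i)) with hT
    have hTmem : ∀ j : Fin n, ∀ i ≤ wordLength (x j), (x j).toWord.take i ∈ T := by
      intro j i hi
      exact Finset.mem_biUnion.mpr ⟨j, Finset.mem_univ j,
        Finset.mem_image.mpr ⟨i, Finset.mem_range.mpr (by omega), rfl⟩⟩
    have key : ∀ j k : Fin n, ((s ^ wordLength ((x k)⁻¹ * (x j)) : ℝ) : ℂ)
        = ∑ v ∈ T, ((xi s (x k) v : ℝ) : ℂ) * ((xi s (x j) v : ℝ) : ℂ) := by
      intro j k
      rw [← sum_xi hs (x k) (x j) T (hTmem k)]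
      push_cast
      rfl
    have main : ∑ j, ∑ k, c j * (starRingEnd ℂ) (c k)
          * ((s ^ wordLength ((x k)⁻¹ * (x j)) : ℝ) : ℂ)
        = ∑ v ∈ T, ((Complex.normSq (∑ j, c j * ((xi s (x j) v : ℝ) : ℂ)) : ℝ) : ℂ) := by
      calc ∑ j, ∑ k, c j * (starRingEnd ℂ) (c k)
              * ((s ^ wordLength ((x k)⁻¹ * (x j)) : ℝ) : ℂ)
          = ∑ j, ∑ k, ∑ v ∈ T, (c j * ((xi s (x j) v : ℝ) : ℂ))
              * (starRingEnd ℂ) (c k * ((xi s (x k) v : ℝ) : ℂ)) := by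
            refine Finset.sum_congr rfl fun j _ => Finset.sum_congr rfl fun k _ => ?_
            rw [key j k, Finset.mul_sum]
            refine Finset.sum_congr rfl fun v _ => ?_
            rw [map_mul, Complex.conj_ofReal]
            ring
        _ = ∑ j, ∑ v ∈ T, ∑ k, (c j * ((xi s (x j) v : ℝ) : ℂ))
              * (starRingEnd ℂ) (c k * ((xi s (x k) v : ℝ) : ℂ)) :=
            Finset.sum_congr rfl fun j _ => Finset.sum_comm
        _ = ∑ v ∈ T, ∑ j, ∑ k, (c j * ((xi s (x j) v : ℝ) : ℂ))
              * (starRingEnd ℂ) (c k * ((xi s (x k) v : ℝ) : ℂ)) :=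
            Finset.sum_comm
        _ = ∑ v ∈ T, (∑ j, c j * ((xi s (x j) v : ℝ) : ℂ))
              * (starRingEnd ℂ) (∑ k, c k * ((xi s (x k) v : ℝ) : ℂ)) := by
            refine Finset.sum_congr rfl fun v _ => ?_
            rw [map_sum, Finset.sum_mul_sum]
        _ = ∑ v ∈ T, ((Complex.normSq (∑ j, c j * ((xi s (x j) v : ℝ) : ℂ)) : ℝ) : ℂ) := by
            refine Finset.sum_congr rfl fun v _ => Complex.mul_conj _
    rw [show (fun x : FreeGroup ℕ => ((s ^ wordLength x : ℝ) : ℂ)) = fun x => ((s ^ wordLength x : ℝ) : ℂ) from rfl]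
    rw [main]
    exact Finset.sum_nonneg fun v _ =>
      Complex.zero_le_real.mpr (Complex.normSq_nonneg _)
end
end

section
/- Let n ∈ ℕ, let Tₙ be the Chebyshev polynomial of the first kind, and let x₀ > 1 be real. Then for every real x with |x| < x₀, (Tₙ(x₀) − Tₙ(x))/(x₀ − x) ≤ T'ₙ(x₀), where T'ₙ denotes the derivative of Tₙ. -/
noncomputable section

open Polynomial Polynomial.Chebyshev Real

/-- evaluation of `U` at a real point -/
private def u (m : ℕ) (y : ℝ) : ℝ := (U ℝ (m : ℤ)).eval y

private lemma u_zero (y : ℝ) : u 0 y = 1 := by simp [u]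

private lemma u_one (y : ℝ) : u 1 y = 2 * y := by simp [u]

private lemma u_add_two (m : ℕ) (y : ℝ) :
    u (m + 2) y = 2 * y * u (m + 1) y - u m y := by
  have h := U_add_two ℝ (m : ℤ)
  have : ((m : ℤ) + 2) = ((m + 2 : ℕ) : ℤ) := by push_cast; ring_nf
  rw [this] at h
  have h2 : ((m : ℤ) + 1) = ((m + 1 : ℕ) : ℤ) := by push_cast; ring_nf
  rw [h2] at h
  simp [u, h]

/-- parity of U in the variable -/
private lemma u_neg (m : ℕ) (y : ℝ) : u m (-y) = (-1) ^ m * u m y := by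
  induction m using Nat.strong_induction_on with
  | _ m ih =>
    match m with
    | 0 => simp [u_zero]
    | 1 => simp [u_one]
    | (k + 2) =>
      rw [u_add_two, u_add_two, ih (k+1) (by omega), ih k (by omega)]
      ring

/-- joint monotonicity invariant on `[1, ∞)` -/
private lemma u_invariant (a b : ℝ) (ha : 1 ≤ a) (hab : a ≤ b) (m : ℕ) :
    0 ≤ u m a ∧ u m a ≤ u (m + 1) a ∧ 0 ≤ u m b - u m a ∧
      u m b - u m a ≤ u (m + 1) b - u (m + 1) a := by
  induction m with
  | zero =>
    refine ⟨by rw [u_zero]; norm_num, ?_, by rw [u_zero, u_zero]; norm_num, ?_⟩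
    · rw [u_zero, u_one]; linarith
    · rw [u_zero, u_zero, u_one, u_one]; linarith
  | succ m ih =>
    obtain ⟨h1, h2, h3, h4⟩ := ih
    have ha1 : 0 ≤ u (m + 1) a := le_trans h1 h2
    have hb1 : u (m + 1) a ≤ u (m + 1) b := by linarith
    refine ⟨ha1, ?_, by linarith, ?_⟩
    · have := u_add_two m a
      nlinarith [this, h1, h2, ha1]
    · have hA := u_add_two m a
      have hB := u_add_two m b
      have hbb : (1 : ℝ) ≤ b := le_trans ha hab
      nlinarith [hA, hB, ha1, hb1, h3, h4]

private lemma u_nonneg (a : ℝ) (ha : 1 ≤ a) (m : ℕ) : 0 ≤ u m a :=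
  (u_invariant a a ha le_rfl m).1

private lemma u_mono (a b : ℝ) (ha : 1 ≤ a) (hab : a ≤ b) (m : ℕ) :
    u m a ≤ u m b := by
  have := (u_invariant a b ha hab m).2.2.1
  linarith

private lemma u_eval_one (m : ℕ) : u m 1 = m + 1 := by
  induction m using Nat.strong_induction_on with
  | _ m ih =>
    match m with
    | 0 => simp [u_zero]
    | 1 => simp [u_one]; norm_num
    | (k + 2) =>
      rw [u_add_two, ih (k+1) (by omega), ih k (by omega)]
      push_cast; ring

private lemma abs_sin_nat_mul_le (k : ℕ) (x : ℝ) : |Real.sin (k * x)| ≤ k * |Real.sin x| := by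
  induction k with
  | zero => simp
  | succ k ih =>
    have : ((k : ℝ) + 1) * x = k * x + x := by ring
    push_cast
    rw [this, Real.sin_add]
    calc |Real.sin (k * x) * Real.cos x + Real.cos (k * x) * Real.sin x|
        ≤ |Real.sin (k * x) * Real.cos x| + |Real.cos (k * x) * Real.sin x| := abs_add_le _ _
      _ ≤ |Real.sin (k * x)| + |Real.sin x| := by
          rw [abs_mul, abs_mul]
          have h1 := Real.abs_cos_le_one x
          have h2 := Real.abs_cos_le_one (k * x)
          have := abs_nonneg (Real.sin (k * x))
          have := abs_nonneg (Real.sin x)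
          nlinarith
      _ ≤ k * |Real.sin x| + |Real.sin x| := by linarith
      _ = ((k : ℝ) + 1) * |Real.sin x| := by ring

/-- bound on `[-1, 1]` -/
private lemma u_abs_le_of_abs_le_one (m : ℕ) (y : ℝ) (hy : |y| ≤ 1) :
    |u m y| ≤ m + 1 := by
  rcases eq_or_lt_of_le hy with h | h
  · -- |y| = 1, so y = 1 or y = -1
    rcases (abs_eq (by norm_num : (0:ℝ) ≤ 1)).mp h with rfl | rfl
    · rw [u_eval_one]; rw [abs_of_nonneg (by positivity)]
    · have : (-1 : ℝ) = -(1 : ℝ) := by norm_num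
      rw [this, u_neg, abs_mul, abs_pow, abs_neg, abs_one, one_pow, one_mul, u_eval_one,
        abs_of_nonneg (by positivity)]
  · -- |y| < 1
    set θ := Real.arccos y with hθ
    have hy1 : -1 ≤ y := by cases abs_lt.mp h; linarith
    have hy2 : y ≤ 1 := by cases abs_lt.mp h; linarith
    have hcos : Real.cos θ = y := Real.cos_arccos hy1 hy2
    have hsin : 0 < Real.sin θ := by
      apply Real.sin_pos_of_pos_of_lt_pi
      · rcases lt_or_ge 0 θ with h' | h'
        · exact h'
        · exfalso
          have : θ = 0 := le_antisymm h' (Real.arccos_nonneg y)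
          rw [this] at hcos
          simp at hcos
          rw [← hcos] at h; simp at h
      · rcases lt_or_ge θ π with h' | h'
        · exact h'
        · exfalso
          have : θ = π := le_antisymm (Real.arccos_le_pi y) h'
          rw [this] at hcos
          simp at hcos
          rw [← hcos] at h; simp at h
    have hU := U_real_cos θ (m : ℤ)
    rw [hcos] at hU
    have hU' : u m y * Real.sin θ = Real.sin (((m : ℕ) + 1 : ℕ) * θ) := by
      rw [u]
      rw [hU]
      congr 1
      push_cast; ring
    have hb := abs_sin_nat_mul_le (m + 1) θ
    rw [← hU'] at hb
    rw [abs_mul, abs_of_pos hsin] at hb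
    push_cast at hb
    rw [← mul_le_mul_iff_of_pos_right hsin]
    exact hb

/-- main bound -/
private lemma u_abs_le (m : ℕ) (x₀ y : ℝ) (hx₀ : 1 ≤ x₀) (hy : |y| ≤ x₀) :
    |u m y| ≤ u m x₀ := by
  rcases le_or_gt |y| 1 with h | h
  · calc |u m y| ≤ m + 1 := u_abs_le_of_abs_le_one m y h
      _ = u m 1 := (u_eval_one m).symm
      _ ≤ u m x₀ := u_mono 1 x₀ le_rfl hx₀ m
  · have habs : |u m y| = u m |y| := by
      rcases le_or_gt 0 y with hy0 | hy0
      · rw [abs_of_nonneg hy0, abs_of_nonneg (u_nonneg y (by rw [abs_of_nonneg hy0] at h; exact h.le) m)]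
      · have h' : |u m y| = |u m (-y)| := by
          rw [u_neg, abs_mul, abs_pow, abs_neg, abs_one, one_pow, one_mul]
        rw [h', show -y = |y| from (abs_of_neg hy0).symm]
        exact abs_of_nonneg (u_nonneg |y| h.le m)
    rw [habs]
    exact u_mono |y| x₀ h.le hy m

/-- derivative comparison -/
private lemma deriv_T_le (n : ℕ) (x₀ z : ℝ) (hx₀ : 1 ≤ x₀) (hz : |z| ≤ x₀) :
    (derivative (T ℝ n)).eval z ≤ (derivative (T ℝ n)).eval x₀ := by
  match n with
  | 0 => simp [Polynomial.Chebyshev.T_zero]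
  | (m + 1) =>
    have hd : derivative (T ℝ ((m + 1 : ℕ) : ℤ)) = ((m + 1 : ℕ) : ℤ) * U ℝ ((m : ℕ) : ℤ) := by
      rw [T_derivative_eq_U]
      congr 1
      push_cast; ring_nf
    rw [hd]
    simp only [Polynomial.eval_mul, Polynomial.eval_intCast]
    have h1 : |u m z| ≤ u m x₀ := u_abs_le m x₀ z hx₀ hz
    have h2 : u m z ≤ u m x₀ := le_trans (le_abs_self _) h1
    have hc : (0:ℝ) ≤ ((m + 1 : ℕ) : ℤ) := by positivity
    have := mul_le_mul_of_nonneg_left h2 hc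
    simpa [u] using this

theorem chebyshevT_secant_le_deriv (n : ℕ) (x₀ : ℝ) (hx₀ : 1 < x₀)
    (x : ℝ) (hx : |x| < x₀) :
    ((Polynomial.Chebyshev.T ℝ n).eval x₀ - (Polynomial.Chebyshev.T ℝ n).eval x) / (x₀ - x) ≤
      (Polynomial.derivative (Polynomial.Chebyshev.T ℝ n)).eval x₀ := by
  have hxlt : x < x₀ := lt_of_le_of_lt (le_abs_self x) hx
  obtain ⟨c, hc, hceq⟩ := exists_deriv_eq_slope (fun y => (T ℝ n).eval y) hxlt
    ((Polynomial.continuous _).continuousOn)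
    (fun y _ => ((Polynomial.differentiable _) y).differentiableWithinAt)
  have hderiv : deriv (fun y => (T ℝ n).eval y) c = (derivative (T ℝ n)).eval c :=
    Polynomial.deriv _
  rw [hderiv] at hceq
  have hcabs : |c| ≤ x₀ := by
    rw [abs_le]
    constructor
    · have := neg_abs_le x
      linarith [hc.1]
    · linarith [hc.2]
  calc ((T ℝ n).eval x₀ - (T ℝ n).eval x) / (x₀ - x)
      = (derivative (T ℝ n)).eval c := hceq.symm
    _ ≤ (derivative (T ℝ n)).eval x₀ := deriv_T_le n x₀ c hx₀.le hcabs
end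
end

section
/- Let n ∈ ℕ, let Uₙ be the Chebyshev polynomial of the second kind, and let x₀ > 1 be real. Then for every real x with |x| < x₀, (Uₙ(x₀) − Uₙ(x))/(x₀ − x) ≤ U'ₙ(x₀), where U'ₙ denotes the derivative of Uₙ. -/
noncomputable section

open Polynomial Polynomial.Chebyshev Real

namespace ChebAux

def ev (n : ℕ) (t : ℝ) : ℝ := (U ℝ n).eval t
def ev' (n : ℕ) (t : ℝ) : ℝ := (derivative (U ℝ n)).eval t

lemma ev_zero (t : ℝ) : ev 0 t = 1 := by simp [ev]
lemma ev_one (t : ℝ) : ev 1 t = 2 * t := by simp [ev]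

lemma U_cast_rec (n : ℕ) : U ℝ ((n : ℤ) + 2) = 2 * X * U ℝ ((n : ℤ) + 1) - U ℝ n :=
  U_add_two ℝ n

lemma ev_rec (n : ℕ) (t : ℝ) : ev (n + 2) t = 2 * t * ev (n + 1) t - ev n t := by
  unfold ev
  push_cast
  rw [U_cast_rec]
  simp

lemma ev'_zero (t : ℝ) : ev' 0 t = 0 := by simp [ev']
lemma ev'_one (t : ℝ) : ev' 1 t = 2 := by simp [ev']

lemma ev'_rec (n : ℕ) (t : ℝ) :
    ev' (n + 2) t = 2 * ev (n + 1) t + 2 * t * ev' (n + 1) t - ev' n t := by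
  unfold ev' ev
  push_cast
  rw [U_cast_rec]
  simp [derivative_mul]


lemma grow (t : ℝ) (ht : 1 ≤ t) :
    ∀ n : ℕ, ((n : ℝ) + 1 ≤ ev n t ∧ ev n t + 1 ≤ ev (n + 1) t) := by
  intro n
  induction n with
  | zero => constructor <;> simp [ev_zero, ev_one] <;> linarith
  | succ k ih =>
    obtain ⟨h1, h2⟩ := ih
    have hk : (k : ℝ) + 1 + 1 ≤ ev (k + 1) t := by linarith
    refine ⟨by push_cast; linarith, ?_⟩
    have hr := ev_rec k t
    nlinarith [hr, h1, h2, hk]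

lemma ev_nonneg (t : ℝ) (ht : 1 ≤ t) (n : ℕ) : 0 ≤ ev n t := by
  have h := (grow t ht n).1
  have : (0:ℝ) ≤ (n:ℝ) + 1 := by positivity
  linarith

lemma mono (s t : ℝ) (hs : 1 ≤ s) (hst : s ≤ t) :
    ∀ n : ℕ, (ev n t - ev n s ≥ 0 ∧ ev (n + 1) t - ev (n + 1) s ≥ ev n t - ev n s) := by
  intro n
  induction n with
  | zero => constructor <;> simp [ev_zero, ev_one] <;> linarith
  | succ k ih =>
    obtain ⟨h1, h2⟩ := ih
    have ht : (1 : ℝ) ≤ t := le_trans hs hst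
    have hpos := (grow t ht (k + 1)).1
    have hrt := ev_rec k t
    have hrs := ev_rec k s
    have hnn : (0:ℝ) ≤ (k:ℝ) + 1 + 1 := by positivity
    refine ⟨by linarith, ?_⟩
    nlinarith [hrt, hrs, h1, h2, hpos, hnn]

lemma ev_le (s t : ℝ) (hs : 1 ≤ s) (hst : s ≤ t) (n : ℕ) : ev n s ≤ ev n t := by
  have := (mono s t hs hst n).1; linarith


lemma parity (x : ℝ) : ∀ n : ℕ, (ev n (-x) = (-1)^n * ev n x ∧
    ev (n+1) (-x) = (-1)^(n+1) * ev (n+1) x) := by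
  intro n
  induction n with
  | zero => constructor <;> simp [ev_zero, ev_one]
  | succ k ih =>
    obtain ⟨h1, h2⟩ := ih
    refine ⟨h2, ?_⟩
    rw [ev_rec, ev_rec, h1, h2]
    ring

lemma ev_one_val : ∀ n : ℕ, ev n 1 = (n : ℝ) + 1 := by
  intro n
  induction n using Nat.strong_induction_on with
  | _ n ih =>
    match n with
    | 0 => simp [ev_zero]
    | 1 => simp [ev_one]; norm_num
    | (k+2) =>
      rw [ev_rec, ih (k+1) (by omega), ih k (by omega)]
      push_cast; ring

lemma sin_bound (θ : ℝ) : ∀ k : ℕ, |Real.sin (k * θ)| ≤ k * |Real.sin θ| := by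
  intro k
  induction k with
  | zero => simp
  | succ m ih =>
    have : ((m+1 : ℕ) : ℝ) * θ = m * θ + θ := by push_cast; ring
    rw [this, Real.sin_add]
    calc |Real.sin (m*θ) * Real.cos θ + Real.cos (m*θ) * Real.sin θ|
        ≤ |Real.sin (m*θ) * Real.cos θ| + |Real.cos (m*θ) * Real.sin θ| := abs_add_le _ _
      _ ≤ |Real.sin (m*θ)| * 1 + 1 * |Real.sin θ| := by
          rw [abs_mul, abs_mul]
          gcongr <;> first | exact Real.abs_cos_le_one _
      _ ≤ m * |Real.sin θ| + |Real.sin θ| := by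
          have := ih; linarith [mul_one (|Real.sin (m*θ)|)]
      _ = (m+1 : ℕ) * |Real.sin θ| := by push_cast; ring

lemma interval_bound (x : ℝ) (hx : |x| ≤ 1) (n : ℕ) : ev n x ≤ (n : ℝ) + 1 := by
  have hx1 : -1 ≤ x := neg_le_of_abs_le hx
  have hx2 : x ≤ 1 := le_of_abs_le hx
  set θ := Real.arccos x with hθ
  have hcos : Real.cos θ = x := Real.cos_arccos hx1 hx2
  have hsin : 0 ≤ Real.sin θ :=
    Real.sin_nonneg_of_nonneg_of_le_pi (Real.arccos_nonneg x) (Real.arccos_le_pi x)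
  have hkey : ev n x * Real.sin θ = Real.sin (((n : ℝ) + 1) * θ) := by
    have := U_real_cos θ (n : ℤ)
    rw [hcos] at this
    unfold ev
    push_cast at this ⊢
    exact this
  rcases eq_or_lt_of_le hsin with h0 | hpos
  · -- sin θ = 0, so x = ±1
    have hx2' : x^2 = 1 := by
      have := Real.sin_sq_add_cos_sq θ
      rw [← h0, hcos] at this
      nlinarith
    have hx' : x = 1 ∨ x = -1 := sq_eq_one_iff.mp hx2'
    rcases hx' with rfl | rfl
    · rw [ev_one_val]
    · rcases (parity 1 n).1 with h
      norm_num at h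
      rw [h, ev_one_val]
      rcases Nat.even_or_odd n with he | ho
      · rw [he.neg_one_pow, one_mul]
      · rw [ho.neg_one_pow]
        have : (0:ℝ) ≤ (n:ℝ) + 1 := by positivity
        linarith
  · have hb := sin_bound θ (n + 1)
    have : ev n x * Real.sin θ ≤ ((n : ℝ) + 1) * Real.sin θ := by
      rw [hkey]
      calc Real.sin (((n : ℝ)+1) * θ) ≤ |Real.sin (((n:ℝ)+1) * θ)| := le_abs_self _
        _ ≤ ((n:ℕ)+1 : ℕ) * |Real.sin θ| := by push_cast at hb ⊢; exact hb
        _ = ((n:ℝ)+1) * Real.sin θ := by rw [abs_of_nonneg hsin]; push_cast; ring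
    exact le_of_mul_le_mul_right this hpos


lemma factA (x₀ x : ℝ) (hx₀ : 1 < x₀) (hx : |x| < x₀) (n : ℕ) : ev n x ≤ ev n x₀ := by
  have hxlt : x < x₀ := lt_of_le_of_lt (le_abs_self x) hx
  have hnxlt : -x < x₀ := lt_of_le_of_lt (neg_le_abs x) hx
  rcases le_or_gt 1 x with h1 | h1
  · exact ev_le x x₀ h1 (le_of_lt hxlt) n
  rcases le_or_gt x (-1) with h2 | h2
  · -- x ≤ -1
    have hnx : 1 ≤ -x := by linarith
    have hp := (parity x n).1
    have hnn : 0 ≤ ev n (-x) := ev_nonneg (-x) hnx n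
    have hle : ev n (-x) ≤ ev n x₀ := ev_le (-x) x₀ hnx (le_of_lt hnxlt) n
    have : ev n x = (-1)^n * ev n (-x) := by
      rcases (parity (-x) n).1 with h
      rw [neg_neg] at h
      exact h
    rw [this]
    rcases Nat.even_or_odd n with he | ho
    · rw [he.neg_one_pow, one_mul]; exact hle
    · rw [ho.neg_one_pow]; nlinarith
  · -- |x| ≤ 1
    have habs : |x| ≤ 1 := abs_le.mpr ⟨le_of_lt h2, le_of_lt h1⟩
    have h3 := interval_bound x habs n
    have h4 := (grow x₀ (le_of_lt hx₀) n).1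
    linarith

lemma main_ind (x₀ x : ℝ) (hx₀ : 1 < x₀) (hx : |x| < x₀) :
    ∀ n : ℕ, (0 ≤ ev' n x₀ * (x₀ - x) - (ev n x₀ - ev n x) ∧
      ev' n x₀ * (x₀ - x) - (ev n x₀ - ev n x) ≤
        ev' (n+1) x₀ * (x₀ - x) - (ev (n+1) x₀ - ev (n+1) x)) := by
  intro n
  have hxlt : x < x₀ := lt_of_le_of_lt (le_abs_self x) hx
  induction n with
  | zero =>
    constructor
    · simp [ev_zero, ev'_zero]
    · simp [ev_zero, ev_one, ev'_zero, ev'_one]; ring_nf; exact le_rfl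
  | succ k ih =>
    obtain ⟨h0, h1⟩ := ih
    have h0' : 0 ≤ ev' (k+1) x₀ * (x₀ - x) - (ev (k+1) x₀ - ev (k+1) x) := le_trans h0 h1
    refine ⟨h0', ?_⟩
    have hrx₀ := ev_rec k x₀
    have hrx := ev_rec k x
    have hr' := ev'_rec k x₀
    have hA := factA x₀ x hx₀ hx (k+1)
    nlinarith [h0, h1, h0', hA, hrx₀, hrx, hr', hxlt, hx₀]

end ChebAux

theorem chebyshevU_secant_le_deriv (n : ℕ) (x₀ : ℝ) (hx₀ : 1 < x₀)
    (x : ℝ) (hx : |x| < x₀) :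
    ((Polynomial.Chebyshev.U ℝ n).eval x₀ - (Polynomial.Chebyshev.U ℝ n).eval x) / (x₀ - x) ≤
      (Polynomial.derivative (Polynomial.Chebyshev.U ℝ n)).eval x₀ := by
  have hxlt : x < x₀ := lt_of_le_of_lt (le_abs_self x) hx
  have hpos : 0 < x₀ - x := by linarith
  have h := (ChebAux.main_ind x₀ x hx₀ hx n).1
  rw [div_le_iff₀ hpos]
  unfold ChebAux.ev ChebAux.ev' at h
  linarith
end
end

section
/- Let F_∞ be the free group on countably infinitely many generators and let ψ: F_∞ → ℝ be a radial conditionally negative definite function with ψ(e) = 0. Then ψ(x) ≤ ψ̇(1)·|x| for every x ∈ F_∞, where ψ̇(1) is the common value of ψ on words of length 1. -/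
open scoped ComplexOrder Nat

noncomputable section

/-- A function on a group is conditionally negative definite if it is hermitian
and the associated quadratic sums over tuples of coefficients summing to zero
are nonpositive (real) numbers. -/
def IsCondNegDef {G : Type*} [Group G] (ψ : G → ℂ) : Prop :=
  (∀ x : G, ψ x⁻¹ = (starRingEnd ℂ) (ψ x)) ∧
  ∀ (n : ℕ) (x : Fin n → G) (c : Fin n → ℂ), (∑ j, c j) = 0 →
    ∑ j, ∑ k, c j * (starRingEnd ℂ) (c k) * ψ ((x k)⁻¹ * x j) ≤ 0

private lemma chain'_of_mem {α : Type*} {P : α → α → Prop} :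
    ∀ l : List α, (∀ x ∈ l, ∀ y ∈ l, P x y) → l.Chain' P
  | [], _ => List.isChain_nil
  | [_], _ => List.isChain_singleton _
  | x :: y :: l, h => by
    show List.IsChain P (x :: y :: l)
    rw [List.isChain_cons_cons]
    exact ⟨h x (by simp) y (by simp),
      chain'_of_mem (y :: l) fun a ha b hb => h a (by simp [ha]) b (by simp [hb])⟩

private lemma reduce_eq_self_of_chain {α : Type*} [DecidableEq α] :
    ∀ L : List (α × Bool), L.Chain' (fun x y => ¬(x.1 = y.1 ∧ x.2 = !y.2)) →
      FreeGroup.reduce L = L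
  | [], _ => rfl
  | [x], _ => rfl
  | x :: y :: L, h => by
    have h1 : ¬(x.1 = y.1 ∧ x.2 = !y.2) := (List.isChain_cons_cons.mp h).1
    have h2 := reduce_eq_self_of_chain (y :: L) (List.isChain_cons_cons.mp h).2
    rw [FreeGroup.reduce.cons, h2]
    simp [h1]

private lemma wordLength_mk (l : List (ℕ × Bool))
    (h : ∀ x ∈ l, ∀ y ∈ l, ¬(x.1 = y.1 ∧ x.2 = !y.2)) :
    wordLength (FreeGroup.mk l) = l.length := by
  unfold wordLength
  rw [FreeGroup.toWord_mk, reduce_eq_self_of_chain _ (chain'_of_mem _ h)]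

/-- the positive word with letters g 0, g 1, ..., g (p-1) -/
private def pw (g : ℕ → ℕ) (p : ℕ) : FreeGroup ℕ :=
  FreeGroup.mk ((List.range p).map fun t => (g t, true))

private lemma wordLength_pw (g : ℕ → ℕ) (p : ℕ) : wordLength (pw g p) = p := by
  rw [pw, wordLength_mk]
  · simp
  · intro x hx y hy
    simp only [List.mem_map] at hx hy
    obtain ⟨s, -, rfl⟩ := hx
    obtain ⟨t, -, rfl⟩ := hy
    simp

private lemma wordLength_pw_inv_mul (g h : ℕ → ℕ) (p q : ℕ) (hgh : ∀ s t, g s ≠ h t) :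
    wordLength ((pw g p)⁻¹ * pw h q) = p + q := by
  rw [pw, pw, FreeGroup.inv_mk, FreeGroup.mul_mk, wordLength_mk]
  · simp [FreeGroup.invRev]
  · intro x hx y hy
    simp only [List.mem_append, FreeGroup.invRev, List.mem_reverse, List.mem_map,
      List.mem_range] at hx hy
    rcases hx with ⟨⟨a, b⟩, ⟨s, -, hs⟩, rfl⟩ | ⟨s, -, rfl⟩ <;>
      rcases hy with ⟨⟨a', b'⟩, ⟨t, -, ht⟩, rfl⟩ | ⟨t, -, rfl⟩
    · obtain ⟨rfl, rfl⟩ := Prod.mk.injEq .. ▸ hs; obtain ⟨rfl, rfl⟩ := Prod.mk.injEq .. ▸ ht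
      simp
    · obtain ⟨rfl, rfl⟩ := Prod.mk.injEq .. ▸ hs
      simpa using fun hh => absurd hh (hgh _ _)
    · obtain ⟨rfl, rfl⟩ := Prod.mk.injEq .. ▸ ht
      simpa using fun hh => absurd hh.symm (hgh _ _)
    · simp


private lemma sum_two (g : ℕ → ℝ) (Rr i j : ℕ) (hij : i ≠ j) (hi : i < Rr) (hj : j < Rr) (t : ℝ) :
    ∑ m ∈ Finset.range Rr, (if m = i then t else if m = j then 1 else 0) * g m
      = t * g i + g j := by
  have hpt : ∀ m, (if m = i then t else if m = j then (1:ℝ) else 0) * g m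
      = (if m = i then t * g m else 0) + (if m = j then g m else 0) := by
    intro m
    by_cases h1 : m = i
    · subst h1
      rw [if_pos rfl, if_pos rfl, if_neg hij]
      ring
    · rw [if_neg h1, if_neg h1]
      by_cases h2 : m = j
      · rw [if_pos h2, if_pos h2]; ring
      · rw [if_neg h2, if_neg h2]; ring
  rw [Finset.sum_congr rfl fun m _ => hpt m, Finset.sum_add_distrib,
    Finset.sum_ite_eq' (Finset.range Rr) i (fun m => t * g m),
    Finset.sum_ite_eq' (Finset.range Rr) j g,
    if_pos (Finset.mem_range.mpr hi), if_pos (Finset.mem_range.mpr hj)]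

private lemma sum_one (g : ℕ → ℝ) (Rr i : ℕ) (hi : i < Rr) :
    ∑ m ∈ Finset.range Rr, (if m = i then (1:ℝ) else 0) * g m = g i := by
  have hpt : ∀ m, (if m = i then (1:ℝ) else 0) * g m = if m = i then g m else 0 :=
    fun m => by split_ifs <;> ring
  rw [Finset.sum_congr rfl fun m _ => hpt m, Finset.sum_ite_eq' (Finset.range Rr) i g,
    if_pos (Finset.mem_range.mpr hi)]

private lemma seq_bound (c : ℕ → ℝ) (h0 : c 0 = 1) (hub : ∀ k, c k ≤ 1) (hlb : ∀ k, 0 ≤ c k)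
    (hH : ∀ (R : ℕ) (v : ℕ → ℝ),
      0 ≤ ∑ i ∈ Finset.range R, ∑ j ∈ Finset.range R, v i * v j * c (i + j))
    (n : ℕ) : 1 - c n ≤ n * (1 - c 1) := by
  classical
  set d : ℕ → ℝ := fun k => c k - 2 * c (k+1) + c (k+2) with hd
  -- Step 1: Hankel positivity for the second difference kernel d
  have hD : ∀ (R : ℕ) (v : ℕ → ℝ),
      0 ≤ ∑ i ∈ Finset.range R, ∑ j ∈ Finset.range R, v i * v j * d (i + j) := by
    intro R v
    set v' : ℕ → ℝ := fun m =>
      (if m < R then v m else 0) -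
        (if m = 0 then 0 else if m - 1 < R then v (m-1) else 0) with hv'
    have helper : ∀ f : ℕ → ℝ,
        ∑ m ∈ Finset.range (R+1), v' m * f m
          = ∑ i ∈ Finset.range R, v i * (f i - f (i+1)) := by
      intro f
      have e1 : ∑ m ∈ Finset.range (R+1), v' m * f m
          = (∑ m ∈ Finset.range (R+1), (if m < R then v m else 0) * f m)
            - ∑ m ∈ Finset.range (R+1),
                (if m = 0 then 0 else if m - 1 < R then v (m-1) else 0) * f m := by
        rw [← Finset.sum_sub_distrib]
        exact Finset.sum_congr rfl fun m _ => by rw [hv']; ring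
      have e2 : ∑ m ∈ Finset.range (R+1), (if m < R then v m else 0) * f m
          = ∑ m ∈ Finset.range R, v m * f m := by
        rw [Finset.sum_range_succ, if_neg (lt_irrefl R), zero_mul, add_zero]
        exact Finset.sum_congr rfl fun m hm => by rw [if_pos (Finset.mem_range.mp hm)]
      have e3 : ∑ m ∈ Finset.range (R+1),
            (if m = 0 then 0 else if m - 1 < R then v (m-1) else 0) * f m
          = ∑ m ∈ Finset.range R, v m * f (m+1) := by
        rw [Finset.sum_range_succ']
        have hc : ∀ m ∈ Finset.range R,
            (if m+1 = 0 then (0:ℝ) else if (m+1) - 1 < R then v ((m+1)-1) else 0) * f (m+1)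
            = v m * f (m+1) := by
          intro m hm
          rw [if_neg (Nat.succ_ne_zero m), Nat.add_sub_cancel, if_pos (Finset.mem_range.mp hm)]
        rw [Finset.sum_congr rfl hc]
        simp
      rw [e1, e2, e3, ← Finset.sum_sub_distrib]
      exact Finset.sum_congr rfl fun m _ => by ring
    have h1 := hH (R+1) v'
    have stepA : ∀ m : ℕ, ∑ nn ∈ Finset.range (R+1), v' m * v' nn * c (m + nn)
        = v' m * ∑ j ∈ Finset.range R, v j * (c (m+j) - c (m+(j+1))) := by
      intro m
      rw [← helper (fun nn => c (m + nn))]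
      rw [Finset.mul_sum]
      exact Finset.sum_congr rfl fun nn _ => by ring
    rw [Finset.sum_congr rfl fun m _ => stepA m] at h1
    have stepB : ∑ m ∈ Finset.range (R+1), v' m * ∑ j ∈ Finset.range R, v j * (c (m+j) - c (m+(j+1)))
        = ∑ j ∈ Finset.range R, v j * ∑ m ∈ Finset.range (R+1), v' m * (c (m+j) - c (m+(j+1))) := by
      rw [Finset.sum_congr rfl fun m (_ : m ∈ Finset.range (R+1)) => Finset.mul_sum
        (Finset.range R) (fun j => v j * (c (m+j) - c (m+(j+1)))) (v' m)]
      rw [Finset.sum_comm]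
      refine Finset.sum_congr rfl fun j _ => ?_
      rw [Finset.mul_sum]
      exact Finset.sum_congr rfl fun m _ => by ring
    rw [stepB] at h1
    have stepC : ∀ j : ℕ, ∑ m ∈ Finset.range (R+1), v' m * (c (m+j) - c (m+(j+1)))
        = ∑ i ∈ Finset.range R, v i * d (i + j) := by
      intro j
      rw [helper (fun m => c (m+j) - c (m+(j+1)))]
      refine Finset.sum_congr rfl fun i _ => ?_
      rw [hd]
      rw [show i+(j+1) = i+j+1 by omega, show (i+1)+j = i+j+1 by omega,
        show (i+1)+(j+1) = i+j+2 by omega]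
      ring
    simp only [stepC] at h1
    have final : ∑ j ∈ Finset.range R, v j * ∑ i ∈ Finset.range R, v i * d (i + j)
        = ∑ i ∈ Finset.range R, ∑ j ∈ Finset.range R, v i * v j * d (i + j) := by
      rw [Finset.sum_congr rfl fun j (_ : j ∈ Finset.range R) =>
        Finset.mul_sum (Finset.range R) (fun i => v i * d (i+j)) (v j)]
      rw [Finset.sum_comm]
      exact Finset.sum_congr rfl fun i _ => Finset.sum_congr rfl fun j _ => by ring
    rw [← final]
    exact h1
  -- diagonal positivity
  have hdiag : ∀ i : ℕ, 0 ≤ d (i+i) := by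
    intro i
    have h1 := hD (i+1) (fun m => if m = i then 1 else 0)
    have inner : ∀ m : ℕ, ∑ j ∈ Finset.range (i+1),
        (if m = i then (1:ℝ) else 0) * (if j = i then (1:ℝ) else 0) * d (m + j)
        = (if m = i then (1:ℝ) else 0) * d (m + i) := by
      intro m
      calc ∑ j ∈ Finset.range (i+1),
          (if m = i then (1:ℝ) else 0) * (if j = i then (1:ℝ) else 0) * d (m + j)
          = (if m = i then (1:ℝ) else 0) *
            ∑ j ∈ Finset.range (i+1), (if j = i then (1:ℝ) else 0) * d (m + j) := by
            rw [Finset.mul_sum]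
            exact Finset.sum_congr rfl fun j _ => by ring
        _ = (if m = i then (1:ℝ) else 0) * d (m + i) := by
            rw [sum_one (fun j => d (m + j)) (i+1) i (Nat.lt_succ_self i)]
    rw [Finset.sum_congr rfl fun m _ => inner m,
      sum_one (fun m => d (m + i)) (i+1) i (Nat.lt_succ_self i)] at h1
    exact h1
  -- Cauchy–Schwarz for the Hankel form
  have hCS : ∀ i j : ℕ, i < j → d (i+j)^2 ≤ d (i+i) * d (j+j) := by
    intro i j hij
    have hq : ∀ t : ℝ, 0 ≤ d (i+i) * (t*t) + (2 * d (i+j)) * t + d (j+j) := by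
      intro t
      have h1 := hD (j+1) (fun m => if m = i then t else if m = j then 1 else 0)
      have h2 : ∀ m : ℕ,
          (∑ jj ∈ Finset.range (j+1), (if m = i then t else if m = j then (1:ℝ) else 0)
            * (if jj = i then t else if jj = j then 1 else 0) * d (m + jj))
          = (if m = i then t else if m = j then (1:ℝ) else 0) * (t * d (m+i) + d (m+j)) := by
        intro m
        calc (∑ jj ∈ Finset.range (j+1), (if m = i then t else if m = j then (1:ℝ) else 0)
            * (if jj = i then t else if jj = j then 1 else 0) * d (m + jj))
            = (if m = i then t else if m = j then (1:ℝ) else 0) *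
              ∑ jj ∈ Finset.range (j+1),
                (if jj = i then t else if jj = j then (1:ℝ) else 0) * d (m + jj) := by
              rw [Finset.mul_sum]
              exact Finset.sum_congr rfl fun jj _ => by ring
          _ = (if m = i then t else if m = j then (1:ℝ) else 0) * (t * d (m+i) + d (m+j)) := by
              rw [sum_two (fun jj => d (m + jj)) (j+1) i j (Nat.ne_of_lt hij)
                (Nat.lt_succ_of_lt hij) (Nat.lt_succ_self j) t]
      rw [Finset.sum_congr rfl fun m _ => h2 m,
        sum_two (fun m => t * d (m+i) + d (m+j)) (j+1) i j (Nat.ne_of_lt hij)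
          (Nat.lt_succ_of_lt hij) (Nat.lt_succ_self j) t] at h1
      calc (0:ℝ) ≤ t * (t * d (i+i) + d (i+j)) + (t * d (j+i) + d (j+j)) := h1
        _ = d (i+i) * (t*t) + (2 * d (i+j)) * t + d (j+j) := by
            rw [show j+i = i+j by omega]; ring
    have hdisc := discrim_le_zero hq
    rw [discrim] at hdisc
    nlinarith [hdisc]
  -- boundedness of the diagonal
  have hbound : ∀ k : ℕ, d (k+k) ≤ 2 := by
    intro k
    have := hub (k+k); have := hub (k+k+2); have := hlb (k+k+1)
    rw [hd]; dsimp only; linarith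
  -- monotonicity of the diagonal
  have hmono : ∀ k : ℕ, d ((k+1)+(k+1)) ≤ d (k+k) := by
    intro k
    by_contra hcon
    push_neg at hcon
    set A : ℕ → ℝ := fun m => d ((k+m)+(k+m)) with hA
    have hApos : ∀ m, 0 ≤ A m := fun m => hdiag _
    have hA2 : ∀ m, A m ≤ 2 := fun m => hbound _
    have hstep : ∀ m, A (m+1)^2 ≤ A m * A (m+2) := by
      intro m
      have h := hCS (k+m) (k+m+2) (by omega)
      rw [hA]
      dsimp only
      rw [show (k+(m+1))+(k+(m+1)) = (k+m)+(k+m+2) by omega,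
        show (k+(m+2))+(k+(m+2)) = (k+m+2)+(k+m+2) by omega]
      exact h
    have h01 : A 0 < A 1 := by
      rw [hA]
      simpa using hcon
    have hA0pos : 0 < A 0 := by
      rcases lt_or_eq_of_le (hApos 0) with h | h
      · exact h
      · exfalso
        have h1 := hstep 0
        rw [← h] at h1
        have : A 1 = 0 := by nlinarith [hApos 1]
        rw [← h] at h01
        linarith [h01, this]
    set r : ℝ := A 1 / A 0 with hr
    have hr1 : 1 < r := (one_lt_div hA0pos).mpr h01
    have claim : ∀ m, A 0 * r^m ≤ A m ∧ r * A m ≤ A (m+1) := by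
      intro m
      induction m with
      | zero =>
        constructor
        · simp
        · rw [hr, div_mul_cancel₀]
          exact ne_of_gt hA0pos
      | succ m ih =>
        obtain ⟨ih1, ih2⟩ := ih
        have hAm_pos : 0 < A m := lt_of_lt_of_le (by positivity) ih1
        have h1 : A 0 * r^(m+1) ≤ A (m+1) := by
          calc A 0 * r^(m+1) = r * (A 0 * r^m) := by ring
          _ ≤ r * A m := by
              exact mul_le_mul_of_nonneg_left ih1 (by linarith)
          _ ≤ A (m+1) := ih2
        refine ⟨h1, ?_⟩
        have hAm1_pos : 0 < A (m+1) := lt_of_lt_of_le (by positivity) h1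
        have h2 : (r * A m) * A (m+1) ≤ A (m+1) * A (m+1) :=
          mul_le_mul_of_nonneg_right ih2 (le_of_lt hAm1_pos)
        have h3 : A (m+1) * A (m+1) ≤ A m * A (m+2) := by
          have := hstep m; nlinarith [this]
        have h4 : (r * A (m+1)) * A m ≤ A (m+2) * A m := by nlinarith [h2, h3]
        have := le_of_mul_le_mul_right h4 hAm_pos
        linarith [this]
    obtain ⟨m, hm⟩ := pow_unbounded_of_one_lt (2 / A 0) hr1
    have : 2 < A 0 * r^m := by
      rw [div_lt_iff₀ hA0pos] at hm; linarith [hm]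
    linarith [(claim m).1, hA2 m, this]
  -- pairing: even+odd partial positivity
  have hpair : ∀ i : ℕ, 0 ≤ d (i+i) + d (i+i+1) := by
    intro i
    have h1 := hCS i (i+1) (Nat.lt_succ_self i)
    rw [show i + (i+1) = i+i+1 by omega] at h1
    have h2 := hmono i
    have h3 := hdiag i
    have h4 := hdiag (i+1)
    nlinarith [h1, h2, h3, h4]
  -- partial sums of d are nonnegative
  have hsum : ∀ m : ℕ, 0 ≤ (∑ j ∈ Finset.range (m+m), d j) ∧
      0 ≤ (∑ j ∈ Finset.range (m+m+1), d j) := by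
    intro m
    induction m with
    | zero =>
      constructor
      · simp
      · simpa using hdiag 0
    | succ m ih =>
      obtain ⟨ih1, ih2⟩ := ih
      have e1 : (m+1)+(m+1) = (m+m)+1+1 := by omega
      have key1 : 0 ≤ ∑ j ∈ Finset.range ((m+m)+1+1), d j := by
        rw [Finset.sum_range_succ, Finset.sum_range_succ]
        have := hpair m
        have h5 : 0 ≤ ∑ j ∈ Finset.range (m+m), d j := ih1
        linarith [this, h5]
      constructor
      · rw [e1]; exact key1
      · rw [show (m+1)+(m+1)+1 = ((m+m)+1+1)+1 by omega, Finset.sum_range_succ]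
        have := hdiag (m+1)
        rw [show (m+1)+(m+1) = m+m+1+1 by omega] at this
        linarith [key1, this]
  have hsumall : ∀ k : ℕ, 0 ≤ ∑ j ∈ Finset.range k, d j := by
    intro k
    rcases Nat.even_or_odd k with ⟨m, hm⟩ | ⟨m, hm⟩
    · rw [hm]; exact (hsum m).1
    · rw [hm, show 2*m+1 = m+m+1 by omega]; exact (hsum m).2
  -- telescoping
  have htel : ∀ k : ℕ, ∑ j ∈ Finset.range k, d j = (c 0 - c 1) - (c k - c (k+1)) := by
    intro k
    induction k with
    | zero => simp
    | succ k ih =>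
      rw [Finset.sum_range_succ, ih, hd]
      dsimp only
      ring_nf
  have hinc : ∀ k : ℕ, c 1 - 1 ≤ c (k+1) - c k := by
    intro k
    have h1 := hsumall k
    rw [htel k, h0] at h1
    linarith [h1]
  -- final induction
  induction n with
  | zero => simp [h0]
  | succ n ih =>
    have h1 := hinc n
    push_cast
    push_cast at ih
    nlinarith [h1, ih]


section grp
variable {ψ : FreeGroup ℕ → ℝ}

private lemma psi_symm (hcnd : IsCondNegDef fun x : FreeGroup ℕ => (ψ x : ℂ))
    (x : FreeGroup ℕ) : ψ x⁻¹ = ψ x := by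
  have h := hcnd.1 x
  simp only [Complex.conj_ofReal] at h
  exact_mod_cast h

private lemma real_cnd (hcnd : IsCondNegDef fun x : FreeGroup ℕ => (ψ x : ℂ))
    {ι : Type} [Fintype ι] (x : ι → FreeGroup ℕ) (c : ι → ℝ) (hc : ∑ j, c j = 0) :
    ∑ j, ∑ k, c j * c k * ψ ((x k)⁻¹ * x j) ≤ 0 := by
  classical
  set e := Fintype.equivFin ι with he
  have h2 := hcnd.2 (Fintype.card ι) (x ∘ e.symm) (fun j => (c (e.symm j) : ℂ)) ?_
  · simp only [Function.comp] at h2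
    have key : (∑ j : Fin (Fintype.card ι), ∑ k : Fin (Fintype.card ι),
          (c (e.symm j) : ℂ) * (starRingEnd ℂ) ((c (e.symm k) : ℂ)) *
            ((ψ ((x (e.symm k))⁻¹ * x (e.symm j)) : ℝ) : ℂ))
        = ∑ j : ι, ∑ k : ι, (c j : ℂ) * (starRingEnd ℂ) ((c k : ℂ)) *
            ((ψ ((x k)⁻¹ * x j) : ℝ) : ℂ) := by
      rw [show (∑ j : Fin (Fintype.card ι), ∑ k : Fin (Fintype.card ι),
          (c (e.symm j) : ℂ) * (starRingEnd ℂ) ((c (e.symm k) : ℂ)) *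
            ((ψ ((x (e.symm k))⁻¹ * x (e.symm j)) : ℝ) : ℂ))
        = ∑ j : Fin (Fintype.card ι), ∑ k : ι, (c (e.symm j) : ℂ) * (starRingEnd ℂ) ((c k : ℂ)) *
            ((ψ ((x k)⁻¹ * x (e.symm j)) : ℝ) : ℂ) from
        Finset.sum_congr rfl fun j _ => Equiv.sum_comp e.symm fun k : ι =>
          (c (e.symm j) : ℂ) * (starRingEnd ℂ) ((c k : ℂ)) * ((ψ ((x k)⁻¹ * x (e.symm j)) : ℝ) : ℂ)]
      exact Equiv.sum_comp e.symm fun j : ι => ∑ k : ι,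
        (c j : ℂ) * (starRingEnd ℂ) ((c k : ℂ)) * ((ψ ((x k)⁻¹ * x j) : ℝ) : ℂ)
    rw [key] at h2
    have hcast : (∑ j : ι, ∑ k : ι, (c j : ℂ) * (starRingEnd ℂ) ((c k : ℂ)) *
          ((ψ ((x k)⁻¹ * x j) : ℝ) : ℂ))
        = ((∑ j, ∑ k, c j * c k * ψ ((x k)⁻¹ * x j) : ℝ) : ℂ) := by
      push_cast [Complex.conj_ofReal]
      rfl
    rw [hcast] at h2
    exact_mod_cast h2
  · have h3 : ∑ j, ((c (e.symm j) : ℂ)) = ∑ i : ι, ((c i : ℂ)) :=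
      Equiv.sum_comp e.symm (fun i => (c i : ℂ))
    rw [h3, ← Complex.ofReal_sum, hc, Complex.ofReal_zero]

private lemma kernel_psd (hcnd : IsCondNegDef fun x : FreeGroup ℕ => (ψ x : ℂ))
    (hψe : ψ 1 = 0) {ι : Type} [Fintype ι] (x : ι → FreeGroup ℕ) (c : ι → ℝ) :
    0 ≤ ∑ j, ∑ k, c j * c k * (ψ (x j) + ψ (x k) - ψ ((x k)⁻¹ * x j)) := by
  classical
  set A := ∑ j, c j with hA
  set B := ∑ j, c j * ψ (x j) with hB
  set S := ∑ j : ι, ∑ k : ι, c j * c k * ψ ((x k)⁻¹ * x j) with hS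
  have h := real_cnd hcnd (fun o : Option ι => o.elim 1 x)
    (fun o : Option ι => o.elim (-A) c) ?_
  · have hexp : ∑ j : Option ι, ∑ k : Option ι,
        (Option.elim j (-A) c) * (Option.elim k (-A) c) *
          ψ ((Option.elim k 1 x)⁻¹ * Option.elim j 1 x)
        = S - 2 * A * B := by
      rw [Fintype.sum_option]
      have hrow0 : ∑ k : Option ι, (Option.elim (none : Option ι) (-A) c) *
            (Option.elim k (-A) c) * ψ ((Option.elim k 1 x)⁻¹ * Option.elim none 1 x)
          = -(A * B) := by
        rw [Fintype.sum_option]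
        simp only [Option.elim, inv_one, one_mul, mul_one, hψe, mul_zero]
        simp only [psi_symm hcnd]
        have : ∀ k : ι, -A * c k * ψ (x k) = -(A * (c k * ψ (x k))) := fun k => by ring
        simp_rw [this]
        rw [Finset.sum_neg_distrib, ← Finset.mul_sum, ← hB]
        ring
      rw [hrow0]
      have hrow : ∀ j : ι, ∑ k : Option ι, (Option.elim (some j) (-A) c) *
            (Option.elim k (-A) c) * ψ ((Option.elim k 1 x)⁻¹ * Option.elim (some j) 1 x)
          = -(A * (c j * ψ (x j))) + ∑ k : ι, c j * c k * ψ ((x k)⁻¹ * x j) := by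
        intro j
        rw [Fintype.sum_option]
        simp only [Option.elim, inv_one, one_mul]
        congr 1
        ring
      rw [Finset.sum_congr rfl fun j _ => hrow j, Finset.sum_add_distrib,
        Finset.sum_neg_distrib, ← Finset.mul_sum, ← hB, ← hS]
      ring
    rw [hexp] at h
    -- now expand the goal
    have row2 : ∀ j : ι, ∑ k, c j * c k * (ψ (x j) + ψ (x k) - ψ ((x k)⁻¹ * x j))
        = c j * ψ (x j) * A + c j * B - ∑ k, c j * c k * ψ ((x k)⁻¹ * x j) := by
      intro j
      have hpt : ∀ k, c j * c k * (ψ (x j) + ψ (x k) - ψ ((x k)⁻¹ * x j))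
          = (c j * ψ (x j)) * c k + c j * (c k * ψ (x k)) - c j * c k * ψ ((x k)⁻¹ * x j) :=
        fun k => by ring
      simp_rw [hpt]
      rw [Finset.sum_sub_distrib, Finset.sum_add_distrib, ← Finset.mul_sum, ← Finset.mul_sum,
        ← hA, ← hB]
    rw [Finset.sum_congr rfl fun j _ => row2 j, Finset.sum_sub_distrib, Finset.sum_add_distrib,
      ← Finset.sum_mul, ← hB, ← Finset.sum_mul, ← hA, ← hS]
    linarith
  · rw [Fintype.sum_option]
    simp only [Option.elim, ← hA]
    ring

open MatrixOrder in
private lemma exp_psd (hcnd : IsCondNegDef fun x : FreeGroup ℕ => (ψ x : ℂ))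
    (hψe : ψ 1 = 0) {ι : Type} [Fintype ι] [DecidableEq ι]
    (x : ι → FreeGroup ℕ) (w : ι → ℝ) (s : ℝ) (hs : 0 ≤ s) :
    0 ≤ ∑ j, ∑ k, w j * w k * Real.exp (-(s * ψ ((x k)⁻¹ * x j))) := by
  classical
  set M : Matrix ι ι ℝ :=
    Matrix.of fun j k => s * (ψ (x j) + ψ (x k) - ψ ((x k)⁻¹ * x j)) with hM
  have hsymm : ∀ j k, ψ ((x k)⁻¹ * x j) = ψ ((x j)⁻¹ * x k) := by
    intro j k
    rw [← psi_symm hcnd ((x j)⁻¹ * x k), mul_inv_rev, inv_inv]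
  have hMpsd : M.PosSemidef := by
    refine Matrix.PosSemidef.of_dotProduct_mulVec_nonneg ?_ ?_
    · show M.conjTranspose = M
      ext j k
      simp only [Matrix.conjTranspose_apply, star_trivial, hM, Matrix.of_apply]
      rw [← hsymm j k]
      ring
    · intro v
      have h0 := kernel_psd hcnd hψe x v
      have heq : dotProduct (star v) (M.mulVec v)
          = s * ∑ j, ∑ k, v j * v k * (ψ (x j) + ψ (x k) - ψ ((x k)⁻¹ * x j)) := by
        simp only [dotProduct, Matrix.mulVec, star_trivial, Pi.star_apply]
        rw [Finset.mul_sum]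
        refine Finset.sum_congr rfl fun j _ => ?_
        rw [Finset.mul_sum, Finset.mul_sum]
        refine Finset.sum_congr rfl fun k _ => ?_
        simp only [hM, Matrix.of_apply]
        ring
      rw [heq]
      exact mul_nonneg hs h0
  set S := CFC.sqrt M with hSdef
  have hGram : ∀ j k, M j k = ∑ t, S j t * S k t := by
    intro j k
    have h1 : (S * S) j k = M j k := by rw [hSdef, CFC.sqrt_mul_sqrt_self M hMpsd.nonneg]
    rw [← h1, Matrix.mul_apply]
    refine Finset.sum_congr rfl fun t _ => ?_
    have h2 : S t k = S k t := by
      have h3 := congrFun (congrFun (Matrix.nonneg_iff_posSemidef.mp (CFC.sqrt_nonneg M)).isHermitian k) t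
      rw [hSdef]
      simpa [Matrix.conjTranspose_apply] using h3
    rw [h2]
  have pow_psd : ∀ (p : ℕ) (u : ι → ℝ), 0 ≤ ∑ j, ∑ k, u j * u k * M j k ^ p := by
    intro p
    induction p with
    | zero =>
      intro u
      simp only [pow_zero, mul_one]
      rw [← Finset.sum_mul_sum]
      exact mul_self_nonneg _
    | succ p ih =>
      intro u
      have step1 : ∑ j, ∑ k, u j * u k * M j k ^ (p + 1)
          = ∑ j, ∑ k, ∑ t, (u j * S j t) * (u k * S k t) * M j k ^ p := by
        refine Finset.sum_congr rfl fun j _ => Finset.sum_congr rfl fun k _ => ?_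
        rw [pow_succ]
        nth_rewrite 2 [hGram j k]
        rw [Finset.mul_sum, Finset.mul_sum]
        refine Finset.sum_congr rfl fun t _ => ?_
        ring
      rw [step1]
      rw [Finset.sum_congr rfl fun j _ => Finset.sum_comm (γ := ι) (f := fun k t =>
        (u j * S j t) * (u k * S k t) * M j k ^ p)]
      rw [Finset.sum_comm]
      exact Finset.sum_nonneg fun t _ => ih fun j => u j * S j t
  set u : ι → ℝ := fun j => w j * Real.exp (-(s * ψ (x j))) with hu
  have hxform : ∀ j k : ι, w j * w k * Real.exp (-(s * ψ ((x k)⁻¹ * x j)))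
      = u j * u k * Real.exp (M j k) := by
    intro j k
    rw [hu]
    simp only [hM, Matrix.of_apply]
    rw [show w j * Real.exp (-(s * ψ (x j))) * (w k * Real.exp (-(s * ψ (x k)))) *
        Real.exp (s * (ψ (x j) + ψ (x k) - ψ ((x k)⁻¹ * x j)))
      = w j * w k * (Real.exp (-(s * ψ (x j))) * Real.exp (-(s * ψ (x k))) *
        Real.exp (s * (ψ (x j) + ψ (x k) - ψ ((x k)⁻¹ * x j)))) from by ring]
    rw [← Real.exp_add, ← Real.exp_add]
    congr 2
    ring
  simp only [hxform]
  have hsummand : ∀ jk : ι × ι,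
      Summable fun p : ℕ => u jk.1 * u jk.2 * (M jk.1 jk.2 ^ p / p !) := fun jk =>
    (Real.summable_pow_div_factorial _).mul_left _
  have hflat : ∑ j, ∑ k, u j * u k * Real.exp (M j k)
      = ∑ jk : ι × ι, u jk.1 * u jk.2 * Real.exp (M jk.1 jk.2) :=
    (Fintype.sum_prod_type (f := fun jk : ι × ι => u jk.1 * u jk.2 * Real.exp (M jk.1 jk.2))).symm
  rw [hflat]
  have hexp : ∀ jk : ι × ι, u jk.1 * u jk.2 * Real.exp (M jk.1 jk.2)
      = ∑' p : ℕ, u jk.1 * u jk.2 * (M jk.1 jk.2 ^ p / p !) := by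
    intro jk
    rw [Real.exp_eq_exp_ℝ, NormedSpace.exp_eq_tsum_div, ← tsum_mul_left]
  rw [Finset.sum_congr rfl fun jk _ => hexp jk]
  rw [← Summable.tsum_finsetSum fun jk _ => hsummand jk]
  refine tsum_nonneg fun p => ?_
  have hps : ∑ jk : ι × ι, u jk.1 * u jk.2 * (M jk.1 jk.2 ^ p / p !)
      = (∑ j, ∑ k, u j * u k * M j k ^ p) * ((p ! : ℝ))⁻¹ := by
    rw [Fintype.sum_prod_type (f := fun jk : ι × ι => u jk.1 * u jk.2 * (M jk.1 jk.2 ^ p / p !)),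
      Finset.sum_mul]
    refine Finset.sum_congr rfl fun j _ => ?_
    rw [Finset.sum_mul]
    refine Finset.sum_congr rfl fun k _ => ?_
    ring
  rw [hps]
  exact mul_nonneg (pow_psd p u) (by positivity)


private lemma hankel_psd (hcnd : IsCondNegDef fun x : FreeGroup ℕ => (ψ x : ℂ))
    (hψe : ψ 1 = 0) {ψd : ℕ → ℝ} (hrad : ∀ x : FreeGroup ℕ, ψ x = ψd (wordLength x))
    (s : ℝ) (hs : 0 ≤ s) (R : ℕ) (v : ℕ → ℝ) :
    0 ≤ ∑ i ∈ Finset.range R, ∑ j ∈ Finset.range R,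
        v i * v j * Real.exp (-(s * ψd (i + j))) := by
  classical
  set T := ∑ i ∈ Finset.range R, ∑ j ∈ Finset.range R,
    v i * v j * Real.exp (-(s * ψd (i + j))) with hT
  set V := ∑ i ∈ Finset.range R, (v i)^2 with hV
  -- key inequality for every positive N
  have key : ∀ N : ℕ, 0 < N → 0 ≤ (N:ℝ)^2 * T + (N:ℝ) * V := by
    intro N hN
    set g : (Fin R × Fin N) → ℕ → ℕ :=
      fun a t => Nat.pair (Nat.pair a.1.val a.2.val) t with hg
    set x : (Fin R × Fin N) → FreeGroup ℕ := fun a => pw (g a) a.1.val with hx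
    have hlen : ∀ a b : Fin R × Fin N, a ≠ b →
        ψ ((x b)⁻¹ * x a) = ψd (a.1.val + b.1.val) := by
      intro a b hab
      rw [hrad, hx]
      have : wordLength ((pw (g b) b.1.val)⁻¹ * pw (g a) a.1.val) = b.1.val + a.1.val := by
        refine wordLength_pw_inv_mul _ _ _ _ fun u t h => ?_
        have h1 := (Nat.pair_eq_pair.mp h).1
        have h2 := Nat.pair_eq_pair.mp h1
        exact hab (Prod.ext (Fin.ext h2.1.symm) (Fin.ext h2.2.symm))
      rw [this, Nat.add_comm]
    have h0 := exp_psd hcnd hψe x (fun a => v a.1.val) s hs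
    have hsplit : ∀ a b : Fin R × Fin N,
        v a.1.val * v b.1.val * Real.exp (-(s * ψ ((x b)⁻¹ * x a)))
        = v a.1.val * v b.1.val * Real.exp (-(s * ψd (a.1.val + b.1.val)))
          + (if a = b then (v a.1.val)^2 * (1 - Real.exp (-(s * ψd (a.1.val + b.1.val)))) else 0) := by
      intro a b
      by_cases hab : a = b
      · subst hab
        rw [if_pos rfl, inv_mul_cancel, hψe]
        simp only [mul_zero, neg_zero, Real.exp_zero, mul_one]
        ring
      · rw [hlen a b hab, if_neg hab, add_zero]
    simp only [hsplit] at h0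
    have hsum_split : ∑ a : Fin R × Fin N, ∑ b : Fin R × Fin N,
        (v a.1.val * v b.1.val * Real.exp (-(s * ψd (a.1.val + b.1.val)))
          + (if a = b then (v a.1.val)^2 * (1 - Real.exp (-(s * ψd (a.1.val + b.1.val)))) else 0))
        = (∑ a : Fin R × Fin N, ∑ b : Fin R × Fin N,
            v a.1.val * v b.1.val * Real.exp (-(s * ψd (a.1.val + b.1.val))))
          + ∑ a : Fin R × Fin N, (v a.1.val)^2 * (1 - Real.exp (-(s * ψd (a.1.val + a.1.val)))) := by
      have inner_eq : ∀ a : Fin R × Fin N,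
          ∑ b : Fin R × Fin N,
            (v a.1.val * v b.1.val * Real.exp (-(s * ψd (a.1.val + b.1.val)))
              + (if a = b then (v a.1.val)^2 * (1 - Real.exp (-(s * ψd (a.1.val + b.1.val)))) else 0))
          = (∑ b : Fin R × Fin N,
              v a.1.val * v b.1.val * Real.exp (-(s * ψd (a.1.val + b.1.val))))
            + (v a.1.val)^2 * (1 - Real.exp (-(s * ψd (a.1.val + a.1.val)))) := by
        intro a
        rw [Finset.sum_add_distrib]
        congr 1
        rw [Finset.sum_ite_eq]
        simp
      rw [Finset.sum_congr rfl fun a _ => inner_eq a, Finset.sum_add_distrib]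
    rw [hsum_split] at h0
    -- evaluate the main double sum
    have hmain : (∑ a : Fin R × Fin N, ∑ b : Fin R × Fin N,
        v a.1.val * v b.1.val * Real.exp (-(s * ψd (a.1.val + b.1.val))))
        = (N:ℝ)^2 * T := by
      rw [hT]
      rw [Finset.sum_range fun i => ∑ j ∈ Finset.range R, v i * v j * Real.exp (-(s * ψd (i + j)))]
      simp only [Finset.sum_range fun j => v _ * v j * Real.exp (-(s * ψd (_ + j)))]
      rw [Fintype.sum_prod_type (f := fun a : Fin R × Fin N => ∑ b : Fin R × Fin N,
        v a.1.val * v b.1.val * Real.exp (-(s * ψd (a.1.val + b.1.val))))]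
      simp only [Fintype.sum_prod_type (f := fun b : Fin R × Fin N =>
        v _ * v b.1.val * Real.exp (-(s * ψd (_ + b.1.val))))]
      simp only [Finset.sum_const, Finset.card_univ, Fintype.card_fin, nsmul_eq_mul]
      rw [Finset.mul_sum]
      refine Finset.sum_congr rfl fun p _ => ?_
      rw [Finset.mul_sum, Finset.mul_sum]
      refine Finset.sum_congr rfl fun q _ => ?_
      ring
    rw [hmain] at h0
    have hdiagsum : ∑ a : Fin R × Fin N, (v a.1.val)^2 = (N:ℝ) * V := by
      rw [hV, Finset.sum_range (fun i => (v i)^2),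
        Fintype.sum_prod_type (f := fun a : Fin R × Fin N => (v a.1.val)^2)]
      simp only [Finset.sum_const, Finset.card_univ, Fintype.card_fin, nsmul_eq_mul]
      rw [← Finset.mul_sum]
    have hdle : ∑ a : Fin R × Fin N,
        (v a.1.val)^2 * (1 - Real.exp (-(s * ψd (a.1.val + a.1.val)))) ≤ (N:ℝ) * V := by
      rw [← hdiagsum]
      refine Finset.sum_le_sum fun a _ => ?_
      nlinarith [sq_nonneg (v a.1.val), Real.exp_nonneg (-(s * ψd (a.1.val + a.1.val)))]
    linarith
  -- conclude via Archimedean property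
  by_contra hneg
  push_neg at hneg
  have hV0 : 0 ≤ V := Finset.sum_nonneg fun i _ => sq_nonneg _
  obtain ⟨N, hNgt⟩ := exists_nat_gt (V / (-T))
  have hN0 : 0 < N := by
    have : (0:ℝ) ≤ V / (-T) := div_nonneg hV0 (by linarith)
    exact_mod_cast Nat.cast_pos.mp (lt_of_le_of_lt this hNgt)
  have hkey := key N hN0
  have hVN : V < (N:ℝ) * (-T) := by
    rw [div_lt_iff₀ (by linarith : (0:ℝ) < -T)] at hNgt
    linarith [hNgt]
  have hNR : (0:ℝ) < (N:ℝ) := by exact_mod_cast hN0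
  nlinarith [hkey, hVN, hNR]


end grp


theorem condNegDef_linear_bound_infinite
    (ψ : FreeGroup ℕ → ℝ) (ψd : ℕ → ℝ)
    (hrad : ∀ x : FreeGroup ℕ, ψ x = ψd (wordLength x))
    (hcnd : IsCondNegDef (fun x : FreeGroup ℕ => (ψ x : ℂ)))
    (hψe : ψ 1 = 0) (x : FreeGroup ℕ) :
    ψ x ≤ ψd 1 * (wordLength x : ℝ) := by
  classical
  have hw1 : wordLength (1 : FreeGroup ℕ) = 0 := by
    unfold wordLength
    rw [FreeGroup.toWord_one]
    rfl
  have hψd0 : ψd 0 = 0 := by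
    have h := hrad 1
    rw [hw1, hψe] at h
    exact h.symm
  have hψ_nonneg : ∀ y : FreeGroup ℕ, 0 ≤ ψ y := by
    intro y
    have h := kernel_psd hcnd hψe (fun _ : Fin 1 => y) (fun _ => (1:ℝ))
    simp only [Finset.sum_const, Finset.card_univ, Fintype.card_fin, one_smul,
      Fin.sum_univ_one, one_mul] at h
    rw [inv_mul_cancel, hψe] at h
    linarith [h]
  have hψd_nonneg : ∀ k : ℕ, 0 ≤ ψd k := by
    intro k
    have h1 : ψ (pw id k) = ψd k := by rw [hrad, wordLength_pw]
    rw [← h1]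
    exact hψ_nonneg _
  rw [hrad x]
  set n := wordLength x with hn
  by_contra hcon
  push_neg at hcon
  set b := ψd 1 * (n:ℝ) with hbdef
  set a := ψd n with hadef
  have hb0 : 0 ≤ b := mul_nonneg (hψd_nonneg 1) (Nat.cast_nonneg n)
  have ha_pos : 0 < a := lt_of_le_of_lt hb0 hcon
  set s := (a - b) / ((b+1) * a) with hs
  have hden_pos : 0 < (b+1) * a := by positivity
  have hs_pos : 0 < s := div_pos (by linarith) hden_pos
  set c : ℕ → ℝ := fun k => Real.exp (-(s * ψd k)) with hc
  have h0 : c 0 = 1 := by rw [hc]; simp [hψd0]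
  have hub : ∀ k, c k ≤ 1 := by
    intro k
    rw [hc]
    calc Real.exp (-(s * ψd k)) ≤ Real.exp 0 := by
          apply Real.exp_le_exp.mpr
          have := mul_nonneg hs_pos.le (hψd_nonneg k)
          linarith
      _ = 1 := Real.exp_zero
  have hlb : ∀ k, 0 ≤ c k := fun k => (Real.exp_pos _).le
  have hH : ∀ (R : ℕ) (v : ℕ → ℝ),
      0 ≤ ∑ i ∈ Finset.range R, ∑ j ∈ Finset.range R, v i * v j * c (i + j) :=
    fun R v => hankel_psd hcnd hψe hrad s hs_pos.le R v
  have hfinal := seq_bound c h0 hub hlb hH n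
  -- 1 - exp(-(s * a)) ≤ n * (1 - exp(-(s*ψd 1))) ≤ n * s * ψd 1 = s * b
  have e2 : 1 - c 1 ≤ s * ψd 1 := by
    have := Real.add_one_le_exp (-(s * ψd 1))
    rw [hc]
    linarith [this]
  have e3 : 1 - c n ≤ s * b := by
    calc 1 - c n ≤ n * (1 - c 1) := hfinal
      _ ≤ n * (s * ψd 1) := by
          apply mul_le_mul_of_nonneg_left e2 (Nat.cast_nonneg n)
      _ = s * b := by rw [hbdef]; ring
  -- lower bound: s*a ≤ (1+s*a) * (1 - c n)
  have h8 : (1 + s*a) * Real.exp (-(s*a)) ≤ 1 := by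
    rw [Real.exp_neg, ← div_eq_mul_inv, div_le_one (Real.exp_pos _)]
    have := Real.add_one_le_exp (s*a)
    linarith [this]
  have hcn : c n = Real.exp (-(s*a)) := by rw [hc, hadef]
  have h9 : s*a ≤ (1 + s*a) * (1 - c n) := by
    rw [hcn]
    nlinarith [h8]
  -- combine
  have h10 : s*a ≤ (1 + s*a) * (s * b) := by
    have hpos : 0 ≤ 1 + s*a := by positivity
    calc s*a ≤ (1 + s*a) * (1 - c n) := h9
      _ ≤ (1 + s*a) * (s * b) := mul_le_mul_of_nonneg_left e3 hpos
  have h11 : a ≤ (1 + s*a) * b := by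
    have h12 : s * a ≤ s * ((1 + s*a) * b) := by linarith [h10]
    exact le_of_mul_le_mul_left (by linarith [h12]) hs_pos
  have hseq : s * ((b+1) * a) = a - b := by
    rw [hs]
    field_simp
  nlinarith [h11, hseq, ha_pos, hb0, hcon]
end
end
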